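/- arXiv:2512.06794 — 3 statements merged into one kernel-verified Lean document; each statement's English description precedes it below -/
import Mathlib

section
/- For every δ ∈ [0,1), the value v_δ equals the concavification of f_δ := (1−δ)·u + δ·(v_δ ∘ M), i.e., v_δ(ξ) = (Cav f_δ)(ξ) for every ξ ∈ Δ(K), where (v_δ ∘ M)(ξ) := v_δ(ξM); in particular, v_δ is concave (hence continuous) on Δ(K). -/
open scoped BigOperators

noncomputable section

/-- A row-stochastic matrix: nonnegative entries, rows summing to 1. -/
def IsStochastic {K : Type*} [Fintype K] (M : Matrix K K ℝ) : Prop :=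
  (∀ i j, 0 ≤ M i j) ∧ ∀ i, ∑ j, M i j = 1

/-- A split of `ξ`: a countable family of weights `α` and beliefs `ξs` with
`α s ≥ 0`, `ξs s ∈ Δ(K)`, `∑ α = 1` and `∑ α_s ξ_s = ξ`. -/
def IsSplit {K : Type*} [Fintype K] (ξ : K → ℝ) (α : ℕ → ℝ) (ξs : ℕ → K → ℝ) : Prop :=
  (∀ s, 0 ≤ α s) ∧ (∀ s, ξs s ∈ stdSimplex ℝ K) ∧ (∑' s, α s) = 1 ∧
    ∀ ℓ : K, (∑' s, α s * ξs s ℓ) = ξ ℓ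

/-- The one-stage payoff of a split in the δ-discounted Bellman equation. -/
def splitPayoff {K : Type*} [Fintype K] (M : Matrix K K ℝ) (u : (K → ℝ) → ℝ) (δ : ℝ)
    (w : (K → ℝ) → ℝ) (α : ℕ → ℝ) (ξs : ℕ → K → ℝ) : ℝ :=
  ∑' s, α s * ((1 - δ) * u (ξs s) + δ * w (Matrix.vecMul (ξs s) M))

/-- `v` is the family of δ-discounted values of the Markovian persuasion game:
for each `δ ∈ [0,1)`, `v δ` is bounded between `0` and `C = ‖u‖∞` on `Δ(K)` and
satisfies the Bellman equation there. -/
def IsValueFamily {K : Type*} [Fintype K] (M : Matrix K K ℝ) (u : (K → ℝ) → ℝ) (C : ℝ)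
    (v : ℝ → (K → ℝ) → ℝ) : Prop :=
  ∀ δ ∈ Set.Ico (0 : ℝ) 1,
    (∀ ξ ∈ stdSimplex ℝ K, 0 ≤ v δ ξ ∧ v δ ξ ≤ C) ∧
    ∀ ξ ∈ stdSimplex ℝ K,
      v δ ξ = sSup { r : ℝ | ∃ α ξs, IsSplit ξ α ξs ∧ r = splitPayoff M u δ (v δ) α ξs }

/-- The concavification of `g`: the smallest concave majorant of `g` on `Δ(K)`. -/
def cav {K : Type*} [Fintype K] (g : (K → ℝ) → ℝ) (ξ : K → ℝ) : ℝ :=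
  sInf { y : ℝ | ∃ h : (K → ℝ) → ℝ, ConcaveOn ℝ (stdSimplex ℝ K) h ∧
    (∀ p ∈ stdSimplex ℝ K, g p ≤ h p) ∧ y = h ξ }

set_option linter.unusedSectionVars false
set_option linter.unusedVariables false
set_option maxHeartbeats 1000000

section Aux

variable {K : Type*} [Fintype K] [Nonempty K]

local notation "Δ" => stdSimplex ℝ K

/-- The payoff of a split against a one-shot reward `g`. -/
def sPay (g : (K → ℝ) → ℝ) (α : ℕ → ℝ) (ξs : ℕ → K → ℝ) : ℝ := ∑' s, α s * g (ξs s)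

/-- The set of achievable one-shot payoffs at `ξ`. -/
def paySet (g : (K → ℝ) → ℝ) (ξ : K → ℝ) : Set ℝ :=
  {r : ℝ | ∃ α ξs, IsSplit ξ α ξs ∧ r = sPay g α ξs}

/-- The supremum of payoffs over splits. -/
def cavS (g : (K → ℝ) → ℝ) (ξ : K → ℝ) : ℝ := sSup (paySet g ξ)

lemma coord_le_one {p : K → ℝ} (hp : p ∈ Δ) (ℓ : K) : p ℓ ≤ 1 := by
  have := Finset.single_le_sum (f := p) (fun i _ => hp.1 i) (Finset.mem_univ ℓ)
  simpa [hp.2] using this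

lemma IsSplit.summable {ξ : K → ℝ} {α : ℕ → ℝ} {ξs : ℕ → K → ℝ}
    (hs : IsSplit ξ α ξs) : Summable α := by
  by_contra hna
  have := tsum_eq_zero_of_not_summable hna
  rw [hs.2.2.1] at this
  norm_num at this

lemma IsSplit.summable_pay {ξ : K → ℝ} {α : ℕ → ℝ} {ξs : ℕ → K → ℝ} {g : (K → ℝ) → ℝ} {B : ℝ}
    (hs : IsSplit ξ α ξs) (hg0 : ∀ p ∈ Δ, 0 ≤ g p) (hgB : ∀ p ∈ Δ, g p ≤ B) :
    Summable fun s => α s * g (ξs s) := by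
  refine Summable.of_nonneg_of_le
    (fun s => mul_nonneg (hs.1 s) (hg0 _ (hs.2.1 s)))
    (fun s => mul_le_mul_of_nonneg_left (hgB _ (hs.2.1 s)) (hs.1 s))
    (hs.summable.mul_right B)

lemma IsSplit.sPay_nonneg {ξ : K → ℝ} {α : ℕ → ℝ} {ξs : ℕ → K → ℝ} {g : (K → ℝ) → ℝ}
    (hs : IsSplit ξ α ξs) (hg0 : ∀ p ∈ Δ, 0 ≤ g p) : 0 ≤ sPay g α ξs :=
  tsum_nonneg fun s => mul_nonneg (hs.1 s) (hg0 _ (hs.2.1 s))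

lemma IsSplit.sPay_le {ξ : K → ℝ} {α : ℕ → ℝ} {ξs : ℕ → K → ℝ} {g : (K → ℝ) → ℝ} {B : ℝ}
    (hs : IsSplit ξ α ξs) (hg0 : ∀ p ∈ Δ, 0 ≤ g p) (hgB : ∀ p ∈ Δ, g p ≤ B) :
    sPay g α ξs ≤ B := by
  have h1 : sPay g α ξs ≤ ∑' s, α s * B := by
    refine Summable.tsum_le_tsum (fun s => mul_le_mul_of_nonneg_left (hgB _ (hs.2.1 s)) (hs.1 s))
      (hs.summable_pay hg0 hgB) (hs.summable.mul_right B)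
  rw [tsum_mul_right, hs.2.2.1, one_mul] at h1
  exact h1

lemma isSplit_trivial {ξ : K → ℝ} (hξ : ξ ∈ Δ) :
    IsSplit ξ (fun s => if s = 0 then 1 else 0) (fun _ => ξ) := by
  refine ⟨fun s => by positivity, fun _ => hξ, by simp [tsum_ite_eq], fun ℓ => ?_⟩
  simp [ite_mul, tsum_ite_eq]

lemma sPay_trivial {ξ : K → ℝ} (g : (K → ℝ) → ℝ) :
    sPay g (fun s => if s = 0 then 1 else 0) (fun _ => ξ) = g ξ := by
  simp [sPay, ite_mul, tsum_ite_eq]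

lemma paySet_nonempty {g : (K → ℝ) → ℝ} {ξ : K → ℝ} (hξ : ξ ∈ Δ) :
    (paySet g ξ).Nonempty :=
  ⟨g ξ, _, _, isSplit_trivial hξ, (sPay_trivial g).symm⟩

lemma paySet_bddAbove {g : (K → ℝ) → ℝ} {B : ℝ} {ξ : K → ℝ}
    (hg0 : ∀ p ∈ Δ, 0 ≤ g p) (hgB : ∀ p ∈ Δ, g p ≤ B) : paySet g ξ ⊆ Set.Iic B := by
  rintro r ⟨α, ξs, hs, rfl⟩
  exact hs.sPay_le hg0 hgB

lemma le_cavS {g : (K → ℝ) → ℝ} {B : ℝ} {ξ : K → ℝ} (hξ : ξ ∈ Δ)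
    (hg0 : ∀ p ∈ Δ, 0 ≤ g p) (hgB : ∀ p ∈ Δ, g p ≤ B) : g ξ ≤ cavS g ξ :=
  le_csSup (BddAbove.mono (paySet_bddAbove hg0 hgB) (bddAbove_Iic))
    ⟨_, _, isSplit_trivial hξ, (sPay_trivial g).symm⟩

lemma cavS_nonneg {g : (K → ℝ) → ℝ} {B : ℝ} {ξ : K → ℝ} (hξ : ξ ∈ Δ)
    (hg0 : ∀ p ∈ Δ, 0 ≤ g p) (hgB : ∀ p ∈ Δ, g p ≤ B) : 0 ≤ cavS g ξ :=
  le_trans (hg0 _ hξ) (le_cavS hξ hg0 hgB)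

lemma cavS_le {g : (K → ℝ) → ℝ} {B : ℝ} {ξ : K → ℝ} (hξ : ξ ∈ Δ)
    (hg0 : ∀ p ∈ Δ, 0 ≤ g p) (hgB : ∀ p ∈ Δ, g p ≤ B) : cavS g ξ ≤ B :=
  csSup_le (paySet_nonempty hξ) (fun r hr => paySet_bddAbove hg0 hgB hr)



lemma hasSum_interleave {f₁ f₂ : ℕ → ℝ} {t₁ t₂ : ℝ} (h₁ : HasSum f₁ t₁) (h₂ : HasSum f₂ t₂) :
    HasSum (fun n => if n % 2 = 0 then f₁ (n / 2) else f₂ (n / 2)) (t₁ + t₂) := by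
  refine HasSum.even_add_odd ?_ ?_
  · have he : (fun k => if (2 * k) % 2 = 0 then f₁ ((2 * k) / 2) else f₂ ((2 * k) / 2)) = f₁ := by
      funext k
      have h1 : (2 * k) % 2 = 0 := by omega
      have h2 : (2 * k) / 2 = k := by omega
      simp [h1, h2]
    rw [he]; exact h₁
  · have ho : (fun k => if (2 * k + 1) % 2 = 0 then f₁ ((2 * k + 1) / 2) else f₂ ((2 * k + 1) / 2))
        = f₂ := by
      funext k
      have h1 : (2 * k + 1) % 2 = 1 := by omega
      have h2 : (2 * k + 1) / 2 = k := by omega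
      simp [h1, h2]
    rw [ho]; exact h₂

/-- Combining splits of `ξ₁` and `ξ₂` into a split of `a • ξ₁ + b • ξ₂`. -/
lemma isSplit_combine {ξ₁ ξ₂ : K → ℝ} {α₁ α₂ : ℕ → ℝ} {ξs₁ ξs₂ : ℕ → K → ℝ}
    {a b : ℝ} (ha : 0 ≤ a) (hb : 0 ≤ b) (hab : a + b = 1)
    (h₁ : IsSplit ξ₁ α₁ ξs₁) (h₂ : IsSplit ξ₂ α₂ ξs₂) :
    IsSplit (a • ξ₁ + b • ξ₂)
      (fun n => if n % 2 = 0 then a * α₁ (n / 2) else b * α₂ (n / 2))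
      (fun n => if n % 2 = 0 then ξs₁ (n / 2) else ξs₂ (n / 2)) := by
  refine ⟨?_, ?_, ?_, ?_⟩
  · intro s; dsimp only; split
    · exact mul_nonneg ha (h₁.1 _)
    · exact mul_nonneg hb (h₂.1 _)
  · intro s; dsimp only; split
    · exact h₁.2.1 _
    · exact h₂.2.1 _
  · have h1 : HasSum (fun k => a * α₁ k) (a * 1) :=
      (h₁.summable.hasSum_iff.2 h₁.2.2.1 : HasSum α₁ 1).mul_left a
    have h2 : HasSum (fun k => b * α₂ k) (b * 1) :=
      (h₂.summable.hasSum_iff.2 h₂.2.2.1 : HasSum α₂ 1).mul_left b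
    have := hasSum_interleave h1 h2
    rw [this.tsum_eq]; linarith
  · intro ℓ
    have s1 : Summable fun s => α₁ s * ξs₁ s ℓ :=
      h₁.summable_pay (g := fun p => p ℓ) (B := 1) (fun p hp => hp.1 ℓ)
        (fun p hp => coord_le_one hp ℓ)
    have s2 : Summable fun s => α₂ s * ξs₂ s ℓ :=
      h₂.summable_pay (g := fun p => p ℓ) (B := 1) (fun p hp => hp.1 ℓ)
        (fun p hp => coord_le_one hp ℓ)
    have h1 : HasSum (fun k => a * (α₁ k * ξs₁ k ℓ)) (a * ξ₁ ℓ) :=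
      (s1.hasSum_iff.2 (h₁.2.2.2 ℓ)).mul_left a
    have h2 : HasSum (fun k => b * (α₂ k * ξs₂ k ℓ)) (b * ξ₂ ℓ) :=
      (s2.hasSum_iff.2 (h₂.2.2.2 ℓ)).mul_left b
    have key := hasSum_interleave h1 h2
    have heq : (fun n => (if n % 2 = 0 then a * (α₁ (n / 2) * ξs₁ (n / 2) ℓ)
          else b * (α₂ (n / 2) * ξs₂ (n / 2) ℓ)))
        = fun n => (if n % 2 = 0 then a * α₁ (n / 2) else b * α₂ (n / 2)) *
            (if n % 2 = 0 then ξs₁ (n / 2) else ξs₂ (n / 2)) ℓ := by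
      funext n; by_cases hn : n % 2 = 0 <;> simp [hn, mul_assoc]
    rw [heq] at key
    rw [key.tsum_eq]
    simp [Pi.add_apply, Pi.smul_apply, smul_eq_mul]

/-- The interleaved payoff. -/
lemma sPay_combine {ξ₁ ξ₂ : K → ℝ} {α₁ α₂ : ℕ → ℝ} {ξs₁ ξs₂ : ℕ → K → ℝ}
    {g : (K → ℝ) → ℝ} {B : ℝ} (hg0 : ∀ p ∈ Δ, 0 ≤ g p) (hgB : ∀ p ∈ Δ, g p ≤ B)
    {a b : ℝ} (ha : 0 ≤ a) (hb : 0 ≤ b)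
    (h₁ : IsSplit ξ₁ α₁ ξs₁) (h₂ : IsSplit ξ₂ α₂ ξs₂) :
    sPay g (fun n => if n % 2 = 0 then a * α₁ (n / 2) else b * α₂ (n / 2))
      (fun n => if n % 2 = 0 then ξs₁ (n / 2) else ξs₂ (n / 2))
      = a * sPay g α₁ ξs₁ + b * sPay g α₂ ξs₂ := by
  have s1 := h₁.summable_pay hg0 hgB
  have s2 := h₂.summable_pay hg0 hgB
  have h1 : HasSum (fun k => a * (α₁ k * g (ξs₁ k))) (a * sPay g α₁ ξs₁) :=
    (s1.hasSum_iff.2 rfl).mul_left a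
  have h2 : HasSum (fun k => b * (α₂ k * g (ξs₂ k))) (b * sPay g α₂ ξs₂) :=
    (s2.hasSum_iff.2 rfl).mul_left b
  have key := hasSum_interleave h1 h2
  have heq : (fun n => (if n % 2 = 0 then a * (α₁ (n / 2) * g (ξs₁ (n / 2)))
        else b * (α₂ (n / 2) * g (ξs₂ (n / 2)))))
      = fun n => (if n % 2 = 0 then a * α₁ (n / 2) else b * α₂ (n / 2)) *
          g (if n % 2 = 0 then ξs₁ (n / 2) else ξs₂ (n / 2)) := by
    funext n; by_cases hn : n % 2 = 0 <;> simp [hn, mul_assoc]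
  rw [heq] at key
  exact key.tsum_eq


/-- Truncating a split: the remainder re-normalizes to a point of the simplex. -/
lemma IsSplit.truncate {ξ : K → ℝ} {α : ℕ → ℝ} {ξs : ℕ → K → ℝ}
    (hs : IsSplit ξ α ξs) (hξ : ξ ∈ Δ) (n : ℕ) :
    ∃ ζ : K → ℝ, ζ ∈ Δ ∧
      (∑ i ∈ Finset.range n, α i • ξs i) + (1 - ∑ i ∈ Finset.range n, α i) • ζ = ξ := by
  classical
  set A : ℝ := ∑ i ∈ Finset.range n, α i with hA
  have hAle : A ≤ 1 := by
    have := Summable.sum_le_tsum (Finset.range n) (fun i _ => hs.1 i) hs.summable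
    rwa [hs.2.2.1] at this
  have hpart : ∀ ℓ, (∑ i ∈ Finset.range n, α i * ξs i ℓ) ≤ ξ ℓ := by
    intro ℓ
    have hsum : Summable fun s => α s * ξs s ℓ :=
      hs.summable_pay (g := fun p => p ℓ) (B := 1) (fun p hp => hp.1 ℓ)
        (fun p hp => coord_le_one hp ℓ)
    have := Summable.sum_le_tsum (Finset.range n)
      (fun i _ => mul_nonneg (hs.1 i) ((hs.2.1 i).1 ℓ)) hsum
    rwa [hs.2.2.2 ℓ] at this
  have hdiffsum : (∑ ℓ, (ξ ℓ - ∑ i ∈ Finset.range n, α i * ξs i ℓ)) = 1 - A := by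
    rw [Finset.sum_sub_distrib, hξ.2, Finset.sum_comm]
    congr 1
    rw [hA]
    refine Finset.sum_congr rfl fun i _ => ?_
    rw [← Finset.mul_sum, (hs.2.1 i).2, mul_one]
  by_cases hr : (1 : ℝ) - A = 0
  · refine ⟨ξ, hξ, ?_⟩
    have hzero : ∀ ℓ, ξ ℓ - (∑ i ∈ Finset.range n, α i * ξs i ℓ) = 0 := by
      have := (Finset.sum_eq_zero_iff_of_nonneg
        (fun ℓ _ => sub_nonneg.2 (hpart ℓ))).1 (by rw [hdiffsum, hr])
      exact fun ℓ => this ℓ (Finset.mem_univ ℓ)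
    funext ℓ
    simp only [Pi.add_apply, Pi.smul_apply, Finset.sum_apply, smul_eq_mul, hr, zero_mul, add_zero]
    have := hzero ℓ
    linarith
  · have hrpos : 0 < 1 - A := lt_of_le_of_ne (by linarith) (Ne.symm hr)
    refine ⟨fun ℓ => (1 - A)⁻¹ * (ξ ℓ - ∑ i ∈ Finset.range n, α i * ξs i ℓ), ⟨?_, ?_⟩, ?_⟩
    · intro ℓ
      exact mul_nonneg (inv_nonneg.2 hrpos.le) (sub_nonneg.2 (hpart ℓ))
    · rw [← Finset.mul_sum, hdiffsum, inv_mul_cancel₀ hr]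
    · funext ℓ
      simp only [Pi.add_apply, Pi.smul_apply, Finset.sum_apply, smul_eq_mul]
      rw [← mul_assoc, mul_inv_cancel₀ hr, one_mul]
      ring
/-- Countable Jensen: a split payoff for `g` is dominated by any nonnegative
    concave majorant of `g` evaluated at the barycenter. -/
lemma IsSplit.sPay_le_of_concave {ξ : K → ℝ} {α : ℕ → ℝ} {ξs : ℕ → K → ℝ}
    {g h : (K → ℝ) → ℝ} {B : ℝ}
    (hs : IsSplit ξ α ξs) (hξ : ξ ∈ Δ) (hh : ConcaveOn ℝ Δ h)
    (hh0 : ∀ p ∈ Δ, 0 ≤ h p) (hgh : ∀ p ∈ Δ, g p ≤ h p)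
    (hg0 : ∀ p ∈ Δ, 0 ≤ g p) (hgB : ∀ p ∈ Δ, g p ≤ B) :
    sPay g α ξs ≤ h ξ := by
  classical
  have hsum := hs.summable_pay hg0 hgB
  refine le_of_tendsto hsum.hasSum.tendsto_sum_nat
    (Filter.Eventually.of_forall fun n => ?_)
  obtain ⟨ζ, hζ, hrep⟩ := hs.truncate hξ n
  set w' : ℕ → ℝ := fun i => if i = n then 1 - ∑ i ∈ Finset.range n, α i else α i with hw'
  set p' : ℕ → K → ℝ := fun i => if i = n then ζ else ξs i with hp'
  have hnotmem : n ∉ Finset.range n := Finset.notMem_range_self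
  have hrange_w : ∀ i ∈ Finset.range n, w' i = α i := by
    intro i hi
    have : i ≠ n := Finset.mem_range.1 hi |>.ne
    simp [hw', this]
  have hrange_p : ∀ i ∈ Finset.range n, p' i = ξs i := by
    intro i hi
    have : i ≠ n := Finset.mem_range.1 hi |>.ne
    simp [hp', this]
  have hAle : (∑ i ∈ Finset.range n, α i) ≤ 1 := by
    have := Summable.sum_le_tsum (Finset.range n) (fun i _ => hs.1 i) hs.summable
    rwa [hs.2.2.1] at this
  have jensen := hh.le_map_sum (t := insert n (Finset.range n)) (w := w') (p := p')
    (fun i _ => by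
      by_cases hi : i = n
      · simp [hw', hi]; linarith
      · simp [hw', hi]; exact hs.1 i)
    (by
      rw [Finset.sum_insert hnotmem, Finset.sum_congr rfl hrange_w]
      simp [hw'])
    (fun i _ => by
      by_cases hi : i = n
      · simpa [hp', hi] using hζ
      · simpa [hp', hi] using hs.2.1 i)
  have hbar : (∑ i ∈ insert n (Finset.range n), w' i • p' i) = ξ := by
    rw [Finset.sum_insert hnotmem]
    have : (∑ i ∈ Finset.range n, w' i • p' i) = ∑ i ∈ Finset.range n, α i • ξs i :=
      Finset.sum_congr rfl fun i hi => by rw [hrange_w i hi, hrange_p i hi]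
    rw [this]
    simp only [hw', hp', if_pos rfl]
    rw [add_comm]
    exact hrep
  rw [hbar] at jensen
  rw [Finset.sum_insert hnotmem] at jensen
  have hln : (∑ i ∈ Finset.range n, w' i • h (p' i)) = ∑ i ∈ Finset.range n, α i • h (ξs i) :=
    Finset.sum_congr rfl fun i hi => by rw [hrange_w i hi, hrange_p i hi]
  rw [hln] at jensen
  have h1 : (0:ℝ) ≤ w' n • h (p' n) := by
    simp only [hw', hp', if_pos rfl]
    exact smul_nonneg (by linarith) (hh0 _ hζ)
  have h2 : (∑ i ∈ Finset.range n, α i * g (ξs i)) ≤ ∑ i ∈ Finset.range n, α i • h (ξs i) := by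
    refine Finset.sum_le_sum fun i _ => ?_
    exact mul_le_mul_of_nonneg_left (hgh _ (hs.2.1 i)) (hs.1 i)
  linarith
/-- `cavS g` is concave on the simplex. -/
lemma concaveOn_cavS {g : (K → ℝ) → ℝ} {B : ℝ}
    (hg0 : ∀ p ∈ Δ, 0 ≤ g p) (hgB : ∀ p ∈ Δ, g p ≤ B) :
    ConcaveOn ℝ Δ (cavS g) := by
  refine ⟨convex_stdSimplex ℝ K, ?_⟩
  intro x hx y hy a b ha hb hab
  have hmem : a • x + b • y ∈ Δ := (convex_stdSimplex ℝ K) hx hy ha hb hab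
  refine le_of_forall_pos_le_add fun ε hε => ?_
  obtain ⟨r₁, hr₁S, hr₁⟩ := exists_lt_of_lt_csSup (paySet_nonempty hx)
    (show cavS g x - ε < cavS g x by linarith)
  obtain ⟨r₂, hr₂S, hr₂⟩ := exists_lt_of_lt_csSup (paySet_nonempty hy)
    (show cavS g y - ε < cavS g y by linarith)
  obtain ⟨α₁, ξs₁, hs₁, rfl⟩ := hr₁S
  obtain ⟨α₂, ξs₂, hs₂, rfl⟩ := hr₂S
  have hcomb : a * sPay g α₁ ξs₁ + b * sPay g α₂ ξs₂ ∈ paySet g (a • x + b • y) :=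
    ⟨_, _, isSplit_combine ha hb hab hs₁ hs₂, (sPay_combine hg0 hgB ha hb hs₁ hs₂).symm⟩
  have hle : a * sPay g α₁ ξs₁ + b * sPay g α₂ ξs₂ ≤ cavS g (a • x + b • y) :=
    le_csSup (BddAbove.mono (paySet_bddAbove hg0 hgB) bddAbove_Iic) hcomb
  have e1 : a * cavS g x ≤ a * (sPay g α₁ ξs₁ + ε) :=
    mul_le_mul_of_nonneg_left (by linarith) ha
  have e2 : b * cavS g y ≤ b * (sPay g α₂ ξs₂ + ε) :=
    mul_le_mul_of_nonneg_left (by linarith) hb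
  have : a * ε + b * ε = ε := by rw [← add_mul, hab, one_mul]
  simp only [smul_eq_mul]
  nlinarith
/-- `cavS g` is below any concave majorant of `g`. -/
lemma cavS_le_majorant {g h : (K → ℝ) → ℝ} {B : ℝ} {ξ : K → ℝ} (hξ : ξ ∈ Δ)
    (hg0 : ∀ p ∈ Δ, 0 ≤ g p) (hgB : ∀ p ∈ Δ, g p ≤ B)
    (hh : ConcaveOn ℝ Δ h) (hgh : ∀ p ∈ Δ, g p ≤ h p) : cavS g ξ ≤ h ξ := by
  refine csSup_le (paySet_nonempty hξ) ?_
  rintro r ⟨α, ξs, hs, rfl⟩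
  exact hs.sPay_le_of_concave hξ hh (fun p hp => le_trans (hg0 p hp) (hgh p hp)) hgh hg0 hgB
/-- The split-supremum coincides with the concavification. -/
lemma cav_eq_cavS {g : (K → ℝ) → ℝ} {B : ℝ} {ξ : K → ℝ} (hξ : ξ ∈ Δ)
    (hg0 : ∀ p ∈ Δ, 0 ≤ g p) (hgB : ∀ p ∈ Δ, g p ≤ B) : cav g ξ = cavS g ξ := by
  have hwit : cavS g ξ ∈ { y : ℝ | ∃ h : (K → ℝ) → ℝ, ConcaveOn ℝ Δ h ∧
      (∀ p ∈ Δ, g p ≤ h p) ∧ y = h ξ } :=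
    ⟨cavS g, concaveOn_cavS hg0 hgB, fun p hp => le_cavS hp hg0 hgB, rfl⟩
  refine le_antisymm (csInf_le ⟨0, ?_⟩ hwit) (le_csInf ⟨_, hwit⟩ ?_)
  · rintro y ⟨h, hh, hgh, rfl⟩
    exact le_trans (hg0 _ hξ) (hgh _ hξ)
  · rintro y ⟨h, hh, hgh, rfl⟩
    exact cavS_le_majorant hξ hg0 hgB hh hgh

/-- The convex hull of a compact set in a finite-dimensional normed space is compact. -/
lemma isCompact_convexHull_fd {E : Type*} [NormedAddCommGroup E] [NormedSpace ℝ E]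
    [FiniteDimensional ℝ E] {s : Set E} (hs : IsCompact s) :
    IsCompact (convexHull ℝ s) := by
  classical
  set N : ℕ := Module.finrank ℝ E + 1 with hN
  set F : ℕ → Set E := fun m =>
    (fun wz : (Fin m → ℝ) × (Fin m → E) => ∑ i, wz.1 i • wz.2 i) ''
      ((stdSimplex ℝ (Fin m)) ×ˢ (Set.univ.pi fun _ : Fin m => s)) with hF
  have hFcompact : ∀ m, IsCompact (F m) := by
    intro m
    refine ((isCompact_stdSimplex ℝ (Fin m)).prod (isCompact_univ_pi fun _ => hs)).image ?_
    exact continuous_finset_sum _ fun i _ =>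
      ((continuous_apply i).comp continuous_fst).smul ((continuous_apply i).comp continuous_snd)
  have hFsub : ∀ m, F m ⊆ convexHull ℝ s := by
    intro m
    rintro x ⟨⟨w, z⟩, ⟨hw, hz⟩, rfl⟩
    exact (convex_convexHull ℝ s).sum_mem (fun i _ => hw.1 i) hw.2
      (fun i _ => subset_convexHull ℝ s (hz i (Set.mem_univ i)))
  have hmain : convexHull ℝ s ⊆ ⋃ m ∈ Finset.range (N + 1), F m := by
    intro x hx
    obtain ⟨ι, hfin, z, w, hrange, haff, hpos, hsum, hcomb⟩ :=
      eq_pos_convex_span_of_mem_convexHull hx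
    haveI hι : Fintype ι := hfin
    rw [Subsingleton.elim hfin hι] at hsum hcomb
    have : Fintype.card ι ≤ N := by
      have h1 := haff.card_le_finrank_succ
      have h2 : Module.finrank ℝ ↥(vectorSpan ℝ (Set.range z)) ≤ Module.finrank ℝ E :=
        Submodule.finrank_le (vectorSpan ℝ (Set.range z))
      exact le_trans h1 (by rw [hN]; exact Nat.add_le_add_right h2 1)
    set m := Fintype.card ι with hm
    have e : ι ≃ Fin m := Fintype.equivFin ι
    have hmem : x ∈ F m := ?_
    · exact Set.mem_biUnion (Finset.mem_range.2 (by omega)) hmem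
    refine ⟨⟨w ∘ e.symm, z ∘ e.symm⟩, ⟨⟨fun j => (hpos (e.symm j)).le, ?_⟩, ?_⟩, ?_⟩
    · exact (Fintype.sum_equiv e.symm (fun j => w (e.symm j)) w fun j => rfl).trans hsum
    · intro j _
      exact hrange (Set.mem_range_self _)
    · show (∑ j : Fin m, w (e.symm j) • z (e.symm j)) = x
      exact (Fintype.sum_equiv e.symm (fun j => w (e.symm j) • z (e.symm j))
        (fun i => w i • z i) fun j => rfl).trans hcomb
  have heq : convexHull ℝ s = ⋃ m ∈ Finset.range (N + 1), F m :=
    le_antisymm hmain (Set.iUnion₂_subset fun m _ => hFsub m)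
  rw [heq]
  exact (Finset.range (N + 1)).isCompact_biUnion fun m _ => hFcompact m

lemma vecMul_mem_simplex {M : Matrix K K ℝ} (hM : IsStochastic M) {p : K → ℝ} (hp : p ∈ Δ) :
    Matrix.vecMul p M ∈ Δ := by
  constructor
  · intro j
    simp only [Matrix.vecMul, dotProduct]
    exact Finset.sum_nonneg fun i _ => mul_nonneg (hp.1 i) (hM.1 i j)
  · simp only [Matrix.vecMul, dotProduct]
    rw [Finset.sum_comm]
    have : ∀ i ∈ Finset.univ, (∑ j, p i * M i j) = p i := by
      intro i _
      rw [← Finset.mul_sum, hM.2 i, mul_one]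
    rw [Finset.sum_congr rfl this, hp.2]

lemma usc_congr_on {f f' : (K → ℝ) → ℝ} (hf : UpperSemicontinuousOn f Δ)
    (hff' : ∀ p ∈ Δ, f p = f' p) : UpperSemicontinuousOn f' Δ := by
  intro ξ hξ y hy
  have h1 := hf ξ hξ y (by show f ξ < y; rwa [hff' ξ hξ])
  filter_upwards [h1, eventually_mem_nhdsWithin] with η h1 h2
  rwa [← hff' η h2]

lemma usc_comp_vecMul {h : (K → ℝ) → ℝ} {M : Matrix K K ℝ} (hM : IsStochastic M)
    (hh : UpperSemicontinuousOn h Δ) :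
    UpperSemicontinuousOn (fun p => h (Matrix.vecMul p M)) Δ := by
  have hcont : Continuous fun p : K → ℝ => Matrix.vecMul p M := by
    refine continuous_pi fun j => ?_
    simp only [Matrix.vecMul, dotProduct]
    exact continuous_finset_sum _ fun i _ => (continuous_apply i).mul continuous_const
  intro ξ hξ y hy
  have h1 := hh _ (vecMul_mem_simplex hM hξ) y hy
  have ht : Filter.Tendsto (fun p : K → ℝ => Matrix.vecMul p M)
      (nhdsWithin ξ Δ) (nhdsWithin (Matrix.vecMul ξ M) Δ) :=
    (hcont.continuousWithinAt).tendsto_nhdsWithin fun p hp => vecMul_mem_simplex hM hp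
  exact ht.eventually h1

lemma usc_const_mul {f : (K → ℝ) → ℝ} {c : ℝ} (hc : 0 ≤ c) (hf : UpperSemicontinuousOn f Δ) :
    UpperSemicontinuousOn (fun p => c * f p) Δ := by
  rcases eq_or_lt_of_le hc with hc0 | hcpos
  · intro ξ hξ y hy
    simp only [← hc0, zero_mul] at hy ⊢
    exact Filter.Eventually.of_forall fun η => hy
  · intro ξ hξ y hy
    have h1 : f ξ < y / c := by rw [lt_div_iff₀ hcpos, mul_comm]; exact hy
    filter_upwards [hf ξ hξ (y / c) h1] with η hη
    show c * f η < y
    rw [mul_comm]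
    exact (lt_div_iff₀ hcpos).1 hη

lemma usc_of_unif_approx {f : (K → ℝ) → ℝ}
    (happ : ∀ ε : ℝ, 0 < ε → ∃ h : (K → ℝ) → ℝ,
      UpperSemicontinuousOn h Δ ∧ ∀ p ∈ Δ, |h p - f p| ≤ ε) :
    UpperSemicontinuousOn f Δ := by
  intro ξ hξ y hy
  set ε := (y - f ξ) / 3 with hε
  have hεpos : 0 < ε := by rw [hε]; linarith
  obtain ⟨h, husc, hcl⟩ := happ ε hεpos
  have hξcl := hcl ξ hξ
  rw [abs_le] at hξcl
  have h1 : h ξ < y - ε := by rw [hε] at hξcl ⊢; linarith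
  filter_upwards [husc ξ hξ (y - ε) h1, eventually_mem_nhdsWithin] with η hη hηΔ
  have := hcl η hηΔ
  rw [abs_le] at this
  linarith

lemma lsc_concaveOn_nonneg {f : (K → ℝ) → ℝ} (hf : ConcaveOn ℝ Δ f)
    (hf0 : ∀ p ∈ Δ, 0 ≤ f p) : LowerSemicontinuousOn f Δ := by
  intro ξ hξ y hy
  by_cases hfx : f ξ ≤ 0
  · filter_upwards [eventually_mem_nhdsWithin] with η hη
    exact lt_of_lt_of_le hy (le_trans hfx (hf0 η hη))
  push_neg at hfx
  set t : ℝ := (max y 0 + f ξ) / (2 * f ξ) with ht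
  have h2fx : 0 < 2 * f ξ := by linarith
  have htpos : 0 < t := div_pos (by positivity) h2fx
  have hmax : max y 0 < f ξ := max_lt hy hfx
  have ht1 : t < 1 := by rw [ht, div_lt_one h2fx]; linarith
  have htfx : t * f ξ = (max y 0 + f ξ) / 2 := by
    rw [ht]; field_simp
  have hty : y < t * f ξ := by
    rw [htfx]
    have := le_max_left y 0
    linarith
  set m : ℝ := Finset.univ.inf' Finset.univ_nonempty (fun ℓ => if ξ ℓ = 0 then 1 else ξ ℓ)
    with hm
  have hmpos : 0 < m := by
    rw [hm, Finset.lt_inf'_iff]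
    intro ℓ _
    by_cases h : ξ ℓ = 0
    · simp [h]
    · simp only [h, if_false]
      exact lt_of_le_of_ne (hξ.1 ℓ) (Ne.symm h)
  set ρ : ℝ := (1 - t) * m with hρ
  have hρpos : 0 < ρ := mul_pos (by linarith) hmpos
  have hball : Metric.ball ξ ρ ∈ nhdsWithin ξ Δ :=
    mem_nhdsWithin_of_mem_nhds (Metric.ball_mem_nhds ξ hρpos)
  filter_upwards [hball, eventually_mem_nhdsWithin] with η hballmem hηΔ
  have hdist : dist η ξ < ρ := Metric.mem_ball.1 hballmem
  have hcoord : ∀ ℓ, t * ξ ℓ ≤ η ℓ := by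
    intro ℓ
    by_cases h0 : ξ ℓ = 0
    · rw [h0, mul_zero]; exact hηΔ.1 ℓ
    · have hmle : m ≤ ξ ℓ := by
        have := Finset.inf'_le (fun ℓ => if ξ ℓ = 0 then 1 else ξ ℓ) (Finset.mem_univ ℓ)
        rw [if_neg h0] at this
        exact le_trans (le_of_eq hm) this
      have hd : dist (η ℓ) (ξ ℓ) ≤ dist η ξ := dist_le_pi_dist η ξ ℓ
      rw [Real.dist_eq] at hd
      have h1 : ξ ℓ - η ℓ ≤ |η ℓ - ξ ℓ| := by
        rw [abs_sub_comm]; exact le_abs_self _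
      have h2 : (1 - t) * m ≤ (1 - t) * ξ ℓ :=
        mul_le_mul_of_nonneg_left hmle (by linarith)
      rw [hρ] at hdist
      nlinarith
  set ζ : K → ℝ := fun ℓ => (1 - t)⁻¹ * (η ℓ - t * ξ ℓ) with hζdef
  have ht1' : (1:ℝ) - t ≠ 0 := by linarith
  have hζ : ζ ∈ Δ := by
    constructor
    · intro ℓ
      exact mul_nonneg (inv_nonneg.2 (by linarith)) (by linarith [hcoord ℓ])
    · show (∑ ℓ, (1 - t)⁻¹ * (η ℓ - t * ξ ℓ)) = 1
      rw [← Finset.mul_sum, Finset.sum_sub_distrib, hηΔ.2, ← Finset.mul_sum, hξ.2,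
        mul_one, inv_mul_cancel₀ ht1']
  have hrep : η = t • ξ + (1 - t) • ζ := by
    funext ℓ
    simp only [Pi.add_apply, Pi.smul_apply, smul_eq_mul, hζdef]
    rw [← mul_assoc, mul_inv_cancel₀ ht1', one_mul]; ring
  have hconc := hf.2 hξ hζ htpos.le (by linarith : (0:ℝ) ≤ 1 - t) (by ring : t + (1 - t) = 1)
  rw [← hrep] at hconc
  simp only [smul_eq_mul] at hconc
  nlinarith [hf0 ζ hζ]

/-- Finite convex combinations are dominated by `cavS`. -/
lemma finite_combo_le_cavS {g : (K → ℝ) → ℝ} {B : ℝ}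
    (hg0 : ∀ p ∈ Δ, 0 ≤ g p) (hgB : ∀ p ∈ Δ, g p ≤ B)
    {ι : Type*} (tset : Finset ι) (wt : ι → ℝ) (p : ι → K → ℝ)
    (hw0 : ∀ i ∈ tset, 0 ≤ wt i) (hw1 : ∑ i ∈ tset, wt i = 1)
    (hpΔ : ∀ i ∈ tset, p i ∈ Δ) :
    (∑ i ∈ tset, wt i * g (p i)) ≤ cavS g (∑ i ∈ tset, wt i • p i) := by
  have h1 : (∑ i ∈ tset, wt i * g (p i)) ≤ ∑ i ∈ tset, wt i • cavS g (p i) := by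
    refine Finset.sum_le_sum fun i hi => ?_
    exact mul_le_mul_of_nonneg_left (le_cavS (hpΔ i hi) hg0 hgB) (hw0 i hi)
  exact le_trans h1 ((concaveOn_cavS hg0 hgB).le_map_sum hw0 hw1 hpΔ)

/-- `cavS` of a bounded nonnegative usc function is usc on the simplex. -/
lemma usc_cavS {g : (K → ℝ) → ℝ} {B : ℝ} (hgusc : UpperSemicontinuousOn g Δ)
    (hg0 : ∀ p ∈ Δ, 0 ≤ g p) (hgB : ∀ p ∈ Δ, g p ≤ B) :
    UpperSemicontinuousOn (cavS g) Δ := by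
  classical
  set G : Set ((K → ℝ) × ℝ) := {q | q.1 ∈ Δ ∧ 0 ≤ q.2 ∧ q.2 ≤ g q.1} with hG
  have hGclosed : IsClosed G := by
    rw [← isSeqClosed_iff_isClosed]
    intro x p hx hlim
    have hlim1 : Filter.Tendsto (fun n => (x n).1) Filter.atTop (nhds p.1) :=
      (Continuous.tendsto continuous_fst p).comp hlim
    have hlim2 : Filter.Tendsto (fun n => (x n).2) Filter.atTop (nhds p.2) :=
      (Continuous.tendsto continuous_snd p).comp hlim
    have hp1 : p.1 ∈ Δ := (isClosed_stdSimplex ℝ K).mem_of_tendsto hlim1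
      (Filter.Eventually.of_forall fun n => (hx n).1)
    have hp2 : 0 ≤ p.2 := ge_of_tendsto hlim2
      (Filter.Eventually.of_forall fun n => (hx n).2.1)
    refine ⟨hp1, hp2, ?_⟩
    by_contra hcon
    push_neg at hcon
    set y : ℝ := (g p.1 + p.2) / 2 with hy
    have h1 : g p.1 < y := by rw [hy]; linarith
    have h2 := hgusc p.1 hp1 y h1
    have htend : Filter.Tendsto (fun n => (x n).1) Filter.atTop (nhdsWithin p.1 Δ) :=
      tendsto_nhdsWithin_iff.2 ⟨hlim1, Filter.Eventually.of_forall fun n => (hx n).1⟩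
    have h3 : ∀ᶠ n in Filter.atTop, (x n).2 ≤ y :=
      (htend.eventually h2).mono fun n hn => le_of_lt (lt_of_le_of_lt (hx n).2.2 hn)
    have h4 : p.2 ≤ y := le_of_tendsto hlim2 h3
    rw [hy] at h4; linarith
  have hGsub : G ⊆ Δ ×ˢ Set.Icc 0 B := fun q hq => ⟨hq.1, hq.2.1, le_trans hq.2.2 (hgB _ hq.1)⟩
  have hGcompact : IsCompact G := IsCompact.of_isClosed_subset
    ((isCompact_stdSimplex ℝ K).prod isCompact_Icc) hGclosed hGsub
  set H : Set ((K → ℝ) × ℝ) := convexHull ℝ G with hH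
  have hHcompact : IsCompact H := isCompact_convexHull_fd hGcompact
  have hHclosed : IsClosed H := hHcompact.isClosed
  have hHsub : H ⊆ Δ ×ˢ Set.Icc 0 B :=
    convexHull_min hGsub ((convex_stdSimplex ℝ K).prod (convex_Icc 0 B))
  set slice : (K → ℝ) → Set ℝ := fun ξ => {t | (ξ, t) ∈ H} with hslice
  have hslicebdd : ∀ ξ, BddAbove (slice ξ) := fun ξ => ⟨B, fun t ht => (hHsub ht).2.2⟩
  have hslicene : ∀ ξ ∈ Δ, (0:ℝ) ∈ slice ξ :=
    fun ξ hξ => subset_convexHull ℝ G ⟨hξ, le_refl 0, hg0 ξ hξ⟩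
  have hslicecompact : ∀ ξ, IsCompact (slice ξ) := by
    intro ξ
    refine IsCompact.of_isClosed_subset isCompact_Icc
      (hHclosed.preimage (Continuous.prodMk_right ξ))
      (fun t ht => ⟨(hHsub ht).2.1, (hHsub ht).2.2⟩)
  set w : (K → ℝ) → ℝ := fun ξ => sSup (slice ξ) with hwdef
  have hwmem : ∀ ξ ∈ Δ, (ξ, w ξ) ∈ H :=
    fun ξ hξ => (hslicecompact ξ).sSup_mem ⟨0, hslicene ξ hξ⟩
  -- w ≤ cavS g on Δ
  have hwle : ∀ ξ ∈ Δ, w ξ ≤ cavS g ξ := by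
    intro ξ hξ
    have hmem := hwmem ξ hξ
    rw [hH, convexHull_eq] at hmem
    obtain ⟨ι, tset, wt, z, hw0, hw1, hzG, hcm⟩ := hmem
    rw [Finset.centerMass_eq_of_sum_1 _ _ hw1] at hcm
    have hfst : (∑ i ∈ tset, wt i • (z i).1) = ξ := by
      have := congrArg Prod.fst hcm
      rw [Prod.fst_sum] at this
      simpa using this
    have hsnd : (∑ i ∈ tset, wt i * (z i).2) = w ξ := by
      have := congrArg Prod.snd hcm
      rw [Prod.snd_sum] at this
      simpa [smul_eq_mul] using this
    have hle1 : w ξ ≤ ∑ i ∈ tset, wt i * g ((z i).1) := by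
      rw [← hsnd]
      exact Finset.sum_le_sum fun i hi =>
        mul_le_mul_of_nonneg_left ((hzG i hi).2.2) (hw0 i hi)
    have hle2 := finite_combo_le_cavS hg0 hgB tset wt (fun i => (z i).1) hw0 hw1
      (fun i hi => (hzG i hi).1)
    rw [hfst] at hle2
    exact le_trans hle1 hle2
  -- cavS g ≤ w on Δ
  have hcavle : ∀ ξ ∈ Δ, cavS g ξ ≤ w ξ := by
    intro ξ hξ
    refine csSup_le (paySet_nonempty hξ) ?_
    rintro r ⟨α, ξs, hs, rfl⟩
    have hsum := hs.summable_pay hg0 hgB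
    refine le_of_tendsto hsum.hasSum.tendsto_sum_nat
      (Filter.Eventually.of_forall fun n => ?_)
    obtain ⟨ζ, hζ, hrep⟩ := hs.truncate hξ n
    set w' : ℕ → ℝ := fun i => if i = n then 1 - ∑ i ∈ Finset.range n, α i else α i with hw'
    set z' : ℕ → (K → ℝ) × ℝ := fun i => if i = n then (ζ, 0) else (ξs i, g (ξs i)) with hz'
    have hnotmem : n ∉ Finset.range n := Finset.notMem_range_self
    have hAle : (∑ i ∈ Finset.range n, α i) ≤ 1 := by
      have := Summable.sum_le_tsum (Finset.range n) (fun i _ => hs.1 i) hs.summable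
      rwa [hs.2.2.1] at this
    have hq : (∑ i ∈ insert n (Finset.range n), w' i • z' i) ∈ H := by
      refine (convex_convexHull ℝ G).sum_mem ?_ ?_ ?_
      · intro i _
        by_cases hi : i = n
        · simp only [hw', hi, if_pos rfl]; linarith
        · simp only [hw', hi, if_false]; exact hs.1 i
      · rw [Finset.sum_insert hnotmem]
        have : (∑ i ∈ Finset.range n, w' i) = ∑ i ∈ Finset.range n, α i :=
          Finset.sum_congr rfl fun i hi => by
            simp [hw', (Finset.mem_range.1 hi).ne]
        rw [this]
        simp [hw']
      · intro i _
        by_cases hi : i = n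
        · simp only [hz', hi, if_pos rfl]
          exact subset_convexHull ℝ G ⟨hζ, le_refl 0, hg0 ζ hζ⟩
        · simp only [hz', hi, if_false]
          exact subset_convexHull ℝ G ⟨hs.2.1 i, hg0 _ (hs.2.1 i), le_refl _⟩
    have hqval : (∑ i ∈ insert n (Finset.range n), w' i • z' i)
        = (ξ, ∑ i ∈ Finset.range n, α i * g (ξs i)) := by
      rw [Finset.sum_insert hnotmem]
      have hcongr : (∑ i ∈ Finset.range n, w' i • z' i)
          = ∑ i ∈ Finset.range n, α i • (ξs i, g (ξs i)) :=
        Finset.sum_congr rfl fun i hi => by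
          simp [hw', hz', (Finset.mem_range.1 hi).ne]
      rw [hcongr]
      simp only [hw', hz', if_pos rfl]
      apply Prod.ext
      · simp only [Prod.fst_add, Prod.smul_fst, Prod.fst_sum]
        rw [add_comm]
        exact hrep
      · simp only [Prod.snd_add, Prod.smul_snd, Prod.snd_sum]
        simp [smul_eq_mul]
    rw [hqval] at hq
    exact le_csSup (hslicebdd ξ) hq
  have heq : ∀ ξ ∈ Δ, cavS g ξ = w ξ := fun ξ hξ => le_antisymm (hcavle ξ hξ) (hwle ξ hξ)
  -- usc of w, transferred to cavS g
  intro ξ hξ y hy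
  rw [heq ξ hξ] at hy
  set Ky : Set (K → ℝ) := Prod.fst '' (H ∩ {q : (K → ℝ) × ℝ | y ≤ q.2}) with hKy
  have hKycompact : IsCompact Ky :=
    ((hHcompact.inter_right (isClosed_le continuous_const continuous_snd)).image continuous_fst)
  have hξnot : ξ ∉ Ky := by
    rintro ⟨q, ⟨hqH, hqy⟩, hq1⟩
    have hqmem : (ξ, q.2) ∈ H := by
      rw [← hq1]
      exact hqH
    have := le_csSup (hslicebdd ξ) hqmem
    exact absurd hy (not_lt.2 (le_trans hqy this))
  have hopen : Kyᶜ ∈ nhds ξ := hKycompact.isClosed.isOpen_compl.mem_nhds hξnot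
  filter_upwards [mem_nhdsWithin_of_mem_nhds hopen, eventually_mem_nhdsWithin] with η hηK hηΔ
  rw [heq η hηΔ]
  by_contra hcon
  push_neg at hcon
  exact hηK ⟨(η, w η), ⟨hwmem η hηΔ, hcon⟩, rfl⟩

/-- `cavS` is nonexpansive with respect to uniform perturbations of the reward. -/
lemma cavS_close {g g' : (K → ℝ) → ℝ} {B ε : ℝ} {ξ : K → ℝ} (hξ : ξ ∈ Δ)
    (hg0 : ∀ p ∈ Δ, 0 ≤ g p) (hgB : ∀ p ∈ Δ, g p ≤ B)
    (hg0' : ∀ p ∈ Δ, 0 ≤ g' p) (hgB' : ∀ p ∈ Δ, g' p ≤ B)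
    (hcl : ∀ p ∈ Δ, |g p - g' p| ≤ ε) : |cavS g ξ - cavS g' ξ| ≤ ε := by
  have key : ∀ g₁ g₂ : (K → ℝ) → ℝ, (∀ p ∈ Δ, 0 ≤ g₁ p) → (∀ p ∈ Δ, g₁ p ≤ B) →
      (∀ p ∈ Δ, 0 ≤ g₂ p) → (∀ p ∈ Δ, g₂ p ≤ B) →
      (∀ p ∈ Δ, g₁ p - g₂ p ≤ ε) → cavS g₁ ξ ≤ cavS g₂ ξ + ε := by
    intro g₁ g₂ h10 h1B h20 h2B hc
    refine csSup_le (paySet_nonempty hξ) ?_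
    rintro r ⟨α, ξs, hs, rfl⟩
    have s1 := hs.summable_pay h10 h1B
    have s2 := hs.summable_pay h20 h2B
    have sε : Summable fun s => α s * ε := hs.summable.mul_right ε
    have hterm : ∀ s, α s * g₁ (ξs s) ≤ α s * g₂ (ξs s) + α s * ε := by
      intro s
      have := mul_le_mul_of_nonneg_left (show g₁ (ξs s) ≤ g₂ (ξs s) + ε by
        linarith [hc _ (hs.2.1 s)]) (hs.1 s)
      rwa [mul_add] at this
    have h1 : sPay g₁ α ξs ≤ ∑' s, (α s * g₂ (ξs s) + α s * ε) :=
      Summable.tsum_le_tsum hterm s1 (s2.add sε)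
    rw [Summable.tsum_add s2 sε, tsum_mul_right, hs.2.2.1, one_mul] at h1
    have h2 : sPay g₂ α ξs ≤ cavS g₂ ξ :=
      le_csSup (BddAbove.mono (paySet_bddAbove h20 h2B) bddAbove_Iic) ⟨α, ξs, hs, rfl⟩
    calc sPay g₁ α ξs ≤ sPay g₂ α ξs + ε := h1
      _ ≤ cavS g₂ ξ + ε := by linarith
  rw [abs_le]
  constructor
  · have := key g' g hg0' hgB' hg0 hgB fun p hp => by
      have := hcl p hp; rw [abs_le] at this; linarith
    linarith
  · have := key g g' hg0 hgB hg0' hgB' fun p hp => by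
      have := hcl p hp; rw [abs_le] at this; linarith
    linarith


end Aux

theorem markovian_persuasion_value_eq_cav_and_concave
    {K : Type*} [Fintype K] [Nonempty K]
    (M : Matrix K K ℝ) (hM : IsStochastic M)
    (u : (K → ℝ) → ℝ) (hu0 : ∀ ξ ∈ stdSimplex ℝ K, 0 ≤ u ξ)
    (husc : UpperSemicontinuousOn u (stdSimplex ℝ K))
    (C : ℝ) (hC : IsLUB (u '' stdSimplex ℝ K) C)
    (v : ℝ → (K → ℝ) → ℝ) (hv : IsValueFamily M u C v) :
    ∀ δ : ℝ, 0 ≤ δ → δ < 1 →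
      (∀ ξ ∈ stdSimplex ℝ K,
        v δ ξ = cav (fun p => (1 - δ) * u p + δ * v δ (Matrix.vecMul p M)) ξ) ∧
      ConcaveOn ℝ (stdSimplex ℝ K) (v δ) ∧
      ContinuousOn (v δ) (stdSimplex ℝ K) := by
  classical
  intro δ hδ0 hδ1
  obtain ⟨hbounds, hbellman⟩ := hv δ ⟨hδ0, hδ1⟩
  have hCub : ∀ p ∈ stdSimplex ℝ K, u p ≤ C := fun p hp => hC.1 ⟨p, hp, rfl⟩
  have hΔne : (stdSimplex ℝ K).Nonempty :=
    ⟨Pi.single (Classical.arbitrary K) 1, single_mem_stdSimplex ℝ _⟩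
  have hC0 : 0 ≤ C := le_trans (hu0 _ hΔne.some_mem) (hCub _ hΔne.some_mem)
  set f : (K → ℝ) → ℝ := fun p => (1 - δ) * u p + δ * v δ (Matrix.vecMul p M) with hf
  have hf0 : ∀ p ∈ stdSimplex ℝ K, 0 ≤ f p := fun p hp =>
    add_nonneg (mul_nonneg (by linarith) (hu0 p hp))
      (mul_nonneg hδ0 ((hbounds _ (vecMul_mem_simplex hM hp)).1))
  have hfC : ∀ p ∈ stdSimplex ℝ K, f p ≤ C := by
    intro p hp
    have h1 : (1 - δ) * u p ≤ (1 - δ) * C :=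
      mul_le_mul_of_nonneg_left (hCub p hp) (by linarith)
    have h2 : δ * v δ (Matrix.vecMul p M) ≤ δ * C :=
      mul_le_mul_of_nonneg_left ((hbounds _ (vecMul_mem_simplex hM hp)).2) hδ0
    have : f p ≤ (1 - δ) * C + δ * C := add_le_add h1 h2
    linarith
  have hveq : ∀ ξ ∈ stdSimplex ℝ K, v δ ξ = cavS f ξ := fun ξ hξ => hbellman ξ hξ
  have hpart1 : ∀ ξ ∈ stdSimplex ℝ K, v δ ξ = cav f ξ := fun ξ hξ => by
    rw [hveq ξ hξ, cav_eq_cavS hξ hf0 hfC]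
  have hconc : ConcaveOn ℝ (stdSimplex ℝ K) (v δ) := by
    have h := concaveOn_cavS hf0 hfC
    refine ⟨convex_stdSimplex ℝ K, ?_⟩
    intro x hx y hy a b ha hb hab
    rw [hveq x hx, hveq y hy, hveq _ ((convex_stdSimplex ℝ K) hx hy ha hb hab)]
    exact h.2 hx hy ha hb hab
  -- iteration for upper semicontinuity
  set T : ((K → ℝ) → ℝ) → ((K → ℝ) → ℝ) :=
    fun W => cavS (fun p => (1 - δ) * u p + δ * W (Matrix.vecMul p M)) with hT
  set Wseq : ℕ → (K → ℝ) → ℝ := fun m => T^[m] (fun _ => 0) with hWseq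
  have hiter : ∀ m : ℕ, (∀ p ∈ stdSimplex ℝ K, 0 ≤ Wseq m p ∧ Wseq m p ≤ C) ∧
      UpperSemicontinuousOn (Wseq m) (stdSimplex ℝ K) ∧
      (∀ p ∈ stdSimplex ℝ K, |Wseq m p - v δ p| ≤ δ ^ m * C) := by
    intro m
    induction m with
    | zero =>
      have hW0 : Wseq 0 = fun _ => (0:ℝ) := rfl
      refine ⟨fun p hp => ⟨le_refl _, by rw [hW0]; exact hC0⟩, ?_, fun p hp => ?_⟩
      · intro ξ hξ y hy
        exact Filter.Eventually.of_forall fun η => hy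
      · rw [hW0]
        simp only [pow_zero, one_mul, zero_sub, abs_neg]
        rw [abs_of_nonneg (hbounds p hp).1]
        exact (hbounds p hp).2
    | succ m ih =>
      obtain ⟨ihb, ihusc, ihcl⟩ := ih
      set gm : (K → ℝ) → ℝ := fun p => (1 - δ) * u p + δ * Wseq m (Matrix.vecMul p M)
        with hgm
      have hgm0 : ∀ p ∈ stdSimplex ℝ K, 0 ≤ gm p := fun p hp =>
        add_nonneg (mul_nonneg (by linarith) (hu0 p hp))
          (mul_nonneg hδ0 ((ihb _ (vecMul_mem_simplex hM hp)).1))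
      have hgmC : ∀ p ∈ stdSimplex ℝ K, gm p ≤ C := by
        intro p hp
        have h1 : (1 - δ) * u p ≤ (1 - δ) * C :=
          mul_le_mul_of_nonneg_left (hCub p hp) (by linarith)
        have h2 : δ * Wseq m (Matrix.vecMul p M) ≤ δ * C :=
          mul_le_mul_of_nonneg_left ((ihb _ (vecMul_mem_simplex hM hp)).2) hδ0
        have : gm p ≤ (1 - δ) * C + δ * C := add_le_add h1 h2
        linarith
      have hgmusc : UpperSemicontinuousOn gm (stdSimplex ℝ K) := by
        intro ξ hξ
        exact UpperSemicontinuousWithinAt.add ((usc_const_mul (by linarith : (0:ℝ) ≤ 1 - δ) husc) ξ hξ)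
          ((usc_const_mul hδ0 (usc_comp_vecMul hM ihusc)) ξ hξ)
      have hW1 : Wseq (m + 1) = T (Wseq m) := Function.iterate_succ_apply' T m _
      have hWgm : Wseq (m + 1) = cavS gm := by rw [hW1]
      refine ⟨?_, ?_, ?_⟩
      · intro p hp
        rw [hWgm]
        exact ⟨cavS_nonneg hp hgm0 hgmC, cavS_le hp hgm0 hgmC⟩
      · rw [hWgm]
        exact usc_cavS hgmusc hgm0 hgmC
      · intro p hp
        rw [hWgm, hveq p hp]
        refine cavS_close hp hgm0 hgmC hf0 hfC ?_
        intro q hq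
        have hqM := vecMul_mem_simplex hM hq
        have : gm q - f q = δ * (Wseq m (Matrix.vecMul q M) - v δ (Matrix.vecMul q M)) := by
          rw [hgm, hf]; ring
        rw [this, abs_mul, abs_of_nonneg hδ0]
        calc δ * |Wseq m (Matrix.vecMul q M) - v δ (Matrix.vecMul q M)|
            ≤ δ * (δ ^ m * C) := mul_le_mul_of_nonneg_left (ihcl _ hqM) hδ0
          _ = δ ^ (m + 1) * C := by ring
  have husc_v : UpperSemicontinuousOn (v δ) (stdSimplex ℝ K) := by
    apply usc_of_unif_approx
    intro ε hε
    have htend : Filter.Tendsto (fun m : ℕ => δ ^ m * C) Filter.atTop (nhds 0) := by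
      have := tendsto_pow_atTop_nhds_zero_of_lt_one hδ0 hδ1
      simpa using this.mul_const C
    obtain ⟨m, hm⟩ := (htend.eventually_lt_const hε).exists
    exact ⟨Wseq m, (hiter m).2.1, fun p hp => le_of_lt (lt_of_le_of_lt ((hiter m).2.2 p hp) hm)⟩
  have hlsc_v : LowerSemicontinuousOn (v δ) (stdSimplex ℝ K) :=
    lsc_concaveOn_nonneg hconc fun p hp => (hbounds p hp).1
  have hcont : ContinuousOn (v δ) (stdSimplex ℝ K) := by
    intro ξ hξ
    rw [ContinuousWithinAt, tendsto_order]
    exact ⟨fun b hb => hlsc_v ξ hξ b hb, fun b hb => husc_v ξ hξ b hb⟩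
  exact ⟨hpart1, hconc, hcont⟩
end
end

section
/- For every δ ∈ [0,1) and every ξ ∈ Δ(K), the Bellman supremum is attained by a split supported on at most k beliefs: there exist weights α₁, …, α_k ≥ 0 with Σ_{i=1}^{k} α_i = 1 and beliefs ξ₁, …, ξ_k ∈ Δ(K) with Σ_{i=1}^{k} α_i ξ_i = ξ such that v_δ(ξ) = Σ_{i=1}^{k} α_i·[(1−δ)·u(ξ_i) + δ·v_δ(ξ_i M)]. -/
open scoped BigOperators
open Filter Topology Set
set_option linter.unusedSectionVars false

noncomputable section

namespace MPAux

variable {K : Type*} [Fintype K] [Nonempty K]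

/-- the uniform belief -/
def unif (K : Type*) [Fintype K] [Nonempty K] : K → ℝ := fun _ => (Fintype.card K : ℝ)⁻¹

lemma unif_mem : unif K ∈ stdSimplex ℝ K := by
  have hc : (0:ℝ) < (Fintype.card K : ℝ) := by exact_mod_cast Fintype.card_pos
  constructor
  · intro i; simp only [unif]; positivity
  · simp only [unif, Finset.sum_const, Finset.card_univ, nsmul_eq_mul]
    field_simp

/-- The set of payoffs of countable splits of `ξ`, for an abstract one-stage payoff `g`. -/
def PhiSet (g : (K → ℝ) → ℝ) (ξ : K → ℝ) : Set ℝ :=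
  {r | ∃ α ξs, IsSplit ξ α ξs ∧ r = ∑' s, α s * g (ξs s)}

def PhiG (g : (K → ℝ) → ℝ) (ξ : K → ℝ) : ℝ := sSup (PhiSet g ξ)

/-- The set of `K`-indexed splits of `ξ`. -/
def ASet (ξ : K → ℝ) : Set ((K → ℝ) × (K → K → ℝ)) :=
  {p | (∀ i, 0 ≤ p.1 i) ∧ (∑ i, p.1 i = 1) ∧ (∀ i, p.2 i ∈ stdSimplex ℝ K) ∧
    ∀ ℓ, ∑ i, p.1 i * p.2 i ℓ = ξ ℓ}

/-- Payoff of a `K`-indexed split (with weights clamped at `0` so it is usc globally). -/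
def FG (g : (K → ℝ) → ℝ) (p : (K → ℝ) × (K → K → ℝ)) : ℝ :=
  ∑ i, max (p.1 i) 0 * g (p.2 i)

section Abstract

variable {g : (K → ℝ) → ℝ} {B : ℝ} {ξ : K → ℝ}

lemma summable_of_split {α : ℕ → ℝ} {ξs : ℕ → K → ℝ} (h : IsSplit ξ α ξs) : Summable α := by
  by_contra hs
  have h1 := h.2.2.1
  rw [tsum_eq_zero_of_not_summable hs] at h1
  norm_num at h1

lemma summable_payoff (hg0 : ∀ x, 0 ≤ g x) (hgB : ∀ x, g x ≤ B)
    {α : ℕ → ℝ} {ξs : ℕ → K → ℝ} (h : IsSplit ξ α ξs) :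
    Summable (fun s => α s * g (ξs s)) := by
  refine Summable.of_nonneg_of_le (fun s => mul_nonneg (h.1 s) (hg0 _)) (fun s => ?_)
    ((summable_of_split h).mul_right B)
  exact mul_le_mul_of_nonneg_left (hgB _) (h.1 s)

lemma payoff_nonneg (hg0 : ∀ x, 0 ≤ g x) {α : ℕ → ℝ} {ξs : ℕ → K → ℝ} (h : IsSplit ξ α ξs) :
    0 ≤ ∑' s, α s * g (ξs s) :=
  tsum_nonneg fun s => mul_nonneg (h.1 s) (hg0 _)

lemma payoff_le (hg0 : ∀ x, 0 ≤ g x) (hgB : ∀ x, g x ≤ B)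
    {α : ℕ → ℝ} {ξs : ℕ → K → ℝ} (h : IsSplit ξ α ξs) :
    (∑' s, α s * g (ξs s)) ≤ B := by
  calc (∑' s, α s * g (ξs s)) ≤ ∑' s, α s * B := by
        refine Summable.tsum_le_tsum (fun s => mul_le_mul_of_nonneg_left (hgB _) (h.1 s))
          (summable_payoff hg0 hgB h) ((summable_of_split h).mul_right B)
    _ = B := by rw [tsum_mul_right, h.2.2.1, one_mul]

lemma trivial_split (hξ : ξ ∈ stdSimplex ℝ K) :
    IsSplit ξ (fun s => if s = 0 then 1 else 0) (fun _ => ξ) := by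
  refine ⟨fun s => by dsimp only; split <;> norm_num, fun _ => hξ, ?_, fun ℓ => ?_⟩
  · exact tsum_ite_eq 0 (fun _ => (1:ℝ))
  · have : (fun s : ℕ => (if s = 0 then (1:ℝ) else 0) * ξ ℓ)
        = fun s : ℕ => if s = 0 then ξ ℓ else 0 := by
      funext s; by_cases h : s = 0 <;> simp [h]
    rw [this]; exact tsum_ite_eq 0 (fun _ => ξ ℓ)

lemma phiSet_nonempty (hξ : ξ ∈ stdSimplex ℝ K) : (PhiSet g ξ).Nonempty := by
  refine ⟨_, _, _, trivial_split hξ, rfl⟩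

lemma phiSet_bddAbove (hg0 : ∀ x, 0 ≤ g x) (hgB : ∀ x, g x ≤ B) : BddAbove (PhiSet g ξ) := by
  refine ⟨B, fun r hr => ?_⟩
  obtain ⟨α, ξs, hsp, rfl⟩ := hr
  exact payoff_le hg0 hgB hsp

lemma phiG_nonneg (hg0 : ∀ x, 0 ≤ g x) (hgB : ∀ x, g x ≤ B) (hξ : ξ ∈ stdSimplex ℝ K) :
    0 ≤ PhiG g ξ :=
  le_csSup_of_le (phiSet_bddAbove hg0 hgB) ⟨_, _, trivial_split hξ, rfl⟩
    (payoff_nonneg hg0 (trivial_split hξ))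

lemma phiG_le (hg0 : ∀ x, 0 ≤ g x) (hgB : ∀ x, g x ≤ B) (hξ : ξ ∈ stdSimplex ℝ K) :
    PhiG g ξ ≤ B :=
  csSup_le (phiSet_nonempty hξ) (fun r hr => by
    obtain ⟨α, ξs, hsp, rfl⟩ := hr; exact payoff_le hg0 hgB hsp)

lemma tsum_dite {n : ℕ} (f : Fin n → ℝ) :
    (∑' s : ℕ, if h : s < n then f ⟨s, h⟩ else 0) = ∑ j, f j := by
  rw [tsum_eq_sum (s := Finset.range n) (fun b hb => by
    rw [dif_neg (by simpa using hb)])]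
  rw [← Fin.sum_univ_eq_sum_range (fun i => if h : i < n then f ⟨i, h⟩ else 0) n]
  exact Finset.sum_congr rfl fun i _ => by rw [dif_pos i.isLt]

lemma fin_mem {ι : Type*} [Fintype ι] (α : ι → ℝ) (ξs : ι → K → ℝ)
    (h0 : ∀ j, 0 ≤ α j) (h1 : ∑ j, α j = 1) (hmem : ∀ j, ξs j ∈ stdSimplex ℝ K)
    (hmix : ∀ ℓ, ∑ j, α j * ξs j ℓ = ξ ℓ) :
    (∑ j, α j * g (ξs j)) ∈ PhiSet g ξ := by
  classical
  set n := Fintype.card ι with hn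
  set e := Fintype.equivFin ι with he
  have main : ∀ φ : ι → ℝ, (∑' s : ℕ, (if h : s < n then φ (e.symm ⟨s, h⟩) else 0)) = ∑ j, φ j := by
    intro φ
    rw [tsum_dite (fun j => φ (e.symm j))]
    exact Equiv.sum_comp e.symm φ
  refine ⟨fun s => if h : s < n then α (e.symm ⟨s, h⟩) else 0,
    fun s => if h : s < n then ξs (e.symm ⟨s, h⟩) else unif K,
    ⟨fun s => ?_, fun s => ?_, ?_, fun ℓ => ?_⟩, ?_⟩
  · dsimp only; split
    · exact h0 _
    · exact le_refl 0
  · dsimp only; split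
    · exact hmem _
    · exact unif_mem
  · rw [main (fun j => α j)]; exact h1
  · rw [show (fun s : ℕ => (if h : s < n then α (e.symm ⟨s, h⟩) else 0) *
        (if h : s < n then ξs (e.symm ⟨s, h⟩) else unif K) ℓ)
      = fun s : ℕ => if h : s < n then α (e.symm ⟨s, h⟩) * ξs (e.symm ⟨s, h⟩) ℓ else 0 by
        funext s; split <;> simp]
    rw [main (fun j => α j * ξs j ℓ)]
    exact hmix ℓ
  · rw [show (fun s : ℕ => (if h : s < n then α (e.symm ⟨s, h⟩) else 0) *
        g (if h : s < n then ξs (e.symm ⟨s, h⟩) else unif K))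
      = fun s : ℕ => if h : s < n then α (e.symm ⟨s, h⟩) * g (ξs (e.symm ⟨s, h⟩)) else 0 by
        funext s; split <;> simp]
    rw [main (fun j => α j * g (ξs j))]

lemma FG_le_phiG (hg0 : ∀ x, 0 ≤ g x) (hgB : ∀ x, g x ≤ B)
    {p : (K → ℝ) × (K → K → ℝ)} (hp : p ∈ ASet ξ) : FG g p ≤ PhiG g ξ := by
  obtain ⟨hp0, hp1, hpm, hpx⟩ := hp
  have : FG g p = ∑ i, p.1 i * g (p.2 i) :=
    Finset.sum_congr rfl fun i _ => by rw [max_eq_left (hp0 i)]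
  rw [this]
  exact le_csSup (phiSet_bddAbove hg0 hgB) (fin_mem p.1 p.2 hp0 hp1 hpm hpx)

lemma coord_le_one {x : K → ℝ} (hx : x ∈ stdSimplex ℝ K) (ℓ : K) : x ℓ ≤ 1 := by
  rw [← hx.2]
  exact Finset.single_le_sum (fun i _ => hx.1 i) (Finset.mem_univ ℓ)

lemma summable_mix {α : ℕ → ℝ} {ξs : ℕ → K → ℝ} (h : IsSplit ξ α ξs) (ℓ : K) :
    Summable (fun s => α s * ξs s ℓ) := by
  refine Summable.of_nonneg_of_le (fun s => mul_nonneg (h.1 s) ((h.2.1 s).1 ℓ)) (fun s => ?_)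
    ((summable_of_split h).mul_right 1)
  exact mul_le_mul_of_nonneg_left (coord_le_one (h.2.1 s) ℓ) (h.1 s)

lemma exists_finsplit (hg0 : ∀ x, 0 ≤ g x) (hgB : ∀ x, g x ≤ B) (hξ : ξ ∈ stdSimplex ℝ K)
    {c : ℝ} (hc : c < PhiG g ξ) :
    ∃ (n : ℕ) (α : Fin n → ℝ) (ξs : Fin n → K → ℝ),
      (∀ j, 0 ≤ α j) ∧ (∑ j, α j = 1) ∧ (∀ j, ξs j ∈ stdSimplex ℝ K) ∧
      (∀ ℓ, ∑ j, α j * ξs j ℓ = ξ ℓ) ∧ c < ∑ j, α j * g (ξs j) := by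
  classical
  obtain ⟨r, ⟨α, ξs, hsp, rfl⟩, hr⟩ := exists_lt_of_lt_csSup (phiSet_nonempty hξ) hc
  obtain ⟨hα0, hmem, hα1, hmix⟩ := hsp
  have hsp' : IsSplit ξ α ξs := ⟨hα0, hmem, hα1, hmix⟩
  have hαs : Summable α := summable_of_split hsp'
  have hps : Summable (fun s => α s * g (ξs s)) := summable_payoff hg0 hgB hsp'
  obtain ⟨N, hN⟩ := ((tendsto_order.1 hps.hasSum.tendsto_sum_nat).1 c hr).exists
  set β := 1 - ∑ s ∈ Finset.range N, α s with hβdef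
  have hβ0 : 0 ≤ β := by
    have h2 := Summable.sum_le_tsum (Finset.range N) (fun s _ => hα0 s) hαs
    rw [hα1] at h2
    simp only [hβdef]; linarith
  have tail_mass : (∑' s, α (s + N)) = β := by
    have h2 := Summable.sum_add_tsum_nat_add (f := α) N hαs
    rw [hα1] at h2
    simp only [hβdef]; linarith
  have tail_mix : ∀ ℓ, (∑' s, α (s + N) * ξs (s + N) ℓ)
      = ξ ℓ - ∑ s ∈ Finset.range N, α s * ξs s ℓ := by
    intro ℓ
    have h2 := Summable.sum_add_tsum_nat_add (f := fun s => α s * ξs s ℓ) N (summable_mix hsp' ℓ)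
    rw [hmix ℓ] at h2
    linarith
  set ξrem : K → ℝ := if β = 0 then unif K
    else fun ℓ => (ξ ℓ - ∑ s ∈ Finset.range N, α s * ξs s ℓ) / β with hremdef
  have tail_nonneg : ∀ ℓ, 0 ≤ ξ ℓ - ∑ s ∈ Finset.range N, α s * ξs s ℓ := by
    intro ℓ
    rw [← tail_mix ℓ]
    exact tsum_nonneg (fun s => mul_nonneg (hα0 _) ((hmem _).1 ℓ))
  have hrem_mix : ∀ ℓ, β * ξrem ℓ = ξ ℓ - ∑ s ∈ Finset.range N, α s * ξs s ℓ := by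
    intro ℓ
    by_cases hz : β = 0
    · have htail0 : ∀ s : ℕ, α (s + N) = 0 := by
        intro s
        have hsum' : Summable (fun s => α (s + N)) := (summable_nat_add_iff N).mpr hαs
        have hle := Summable.le_tsum hsum' s (fun j _ => hα0 _)
        have := hα0 (s + N)
        rw [tail_mass, hz] at hle
        linarith
      have : (∑' s, α (s + N) * ξs (s + N) ℓ) = 0 := by
        have : (fun s => α (s + N) * ξs (s + N) ℓ) = fun _ => 0 := by
          funext s; rw [htail0 s, zero_mul]
        rw [this, tsum_zero]
      rw [← tail_mix ℓ, this, hz, zero_mul]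
    · have hh : ξrem ℓ = (ξ ℓ - ∑ s ∈ Finset.range N, α s * ξs s ℓ) / β := by
        rw [hremdef, if_neg hz]
      rw [hh, mul_comm, div_mul_cancel₀ _ hz]
  have hrem_mem : ξrem ∈ stdSimplex ℝ K := by
    by_cases hz : β = 0
    · simp only [hremdef, if_pos hz]; exact unif_mem
    · have hβpos : 0 < β := lt_of_le_of_ne hβ0 (Ne.symm hz)
      simp only [hremdef, if_neg hz]
      constructor
      · intro ℓ; exact div_nonneg (tail_nonneg ℓ) hβ0
      · rw [← Finset.sum_div]
        rw [div_eq_one_iff_eq hz]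
        have hswap : ∑ ℓ, ∑ s ∈ Finset.range N, α s * ξs s ℓ
            = ∑ s ∈ Finset.range N, α s := by
          rw [Finset.sum_comm]
          refine Finset.sum_congr rfl fun s _ => ?_
          rw [← Finset.mul_sum, (hmem s).2, mul_one]
        rw [Finset.sum_sub_distrib, hswap, hξ.2]
  refine ⟨N + 1, fun j => if (j : ℕ) < N then α j else β,
    fun j => if (j : ℕ) < N then ξs j else ξrem, ?_, ?_, ?_, ?_, ?_⟩
  · intro j; dsimp only; split
    · exact hα0 _
    · exact hβ0
  · rw [Fin.sum_univ_castSucc]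
    simp only [Fin.coe_castSucc, Fin.is_lt, if_true, Fin.val_last, lt_irrefl, if_false]
    rw [Fin.sum_univ_eq_sum_range α N]
    simp only [hβdef]; ring
  · intro j; dsimp only; split
    · exact hmem _
    · exact hrem_mem
  · intro ℓ
    rw [Fin.sum_univ_castSucc]
    simp only [Fin.coe_castSucc, Fin.is_lt, if_true, Fin.val_last, lt_irrefl, if_false]
    rw [Fin.sum_univ_eq_sum_range (fun s => α s * ξs s ℓ) N]
    rw [hrem_mix ℓ]; ring
  · rw [Fin.sum_univ_castSucc]
    simp only [Fin.coe_castSucc, Fin.is_lt, if_true, Fin.val_last, lt_irrefl, if_false]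
    rw [Fin.sum_univ_eq_sum_range (fun s => α s * g (ξs s)) N]
    have : 0 ≤ β * g ξrem := mul_nonneg hβ0 (hg0 _)
    linarith

lemma sum_dite_le {n k : ℕ} (h : n ≤ k) (f : Fin n → ℝ) :
    (∑ m : Fin k, if hm : (m : ℕ) < n then f ⟨m, hm⟩ else 0) = ∑ j, f j := by
  rw [Fin.sum_univ_eq_sum_range (fun m => if hm : m < n then f ⟨m, hm⟩ else 0) k]
  rw [← Finset.sum_subset (Finset.range_subset_range.2 h)
    (fun x _ hnx => dif_neg (by simpa using hnx))]
  rw [← Fin.sum_univ_eq_sum_range (fun m => if hm : m < n then f ⟨m, hm⟩ else 0) n]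
  exact Finset.sum_congr rfl fun m _ => by rw [dif_pos m.isLt]

lemma reduce (hg0 : ∀ x, 0 ≤ g x) :
    ∀ n (α : Fin n → ℝ) (ξs : Fin n → K → ℝ),
      (∀ j, 0 ≤ α j) → (∑ j, α j = 1) → (∀ j, ξs j ∈ stdSimplex ℝ K) →
      (∀ ℓ, ∑ j, α j * ξs j ℓ = ξ ℓ) →
      ∃ p ∈ ASet ξ, (∑ j, α j * g (ξs j)) ≤ FG g p := by
  intro n
  induction n using Nat.strong_induction_on with
  | _ n ih =>
  intro α ξs h0 h1 hmem hmix
  classical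
  by_cases hnk : n ≤ Fintype.card K
  · -- pad to a K-indexed split
    set e := Fintype.equivFin K with he
    have key : ∀ f : Fin n → ℝ,
        (∑ i : K, if hm : ((e i : Fin (Fintype.card K)) : ℕ) < n then f ⟨e i, hm⟩ else 0)
          = ∑ j, f j := by
      intro f
      rw [Equiv.sum_comp e (fun m : Fin (Fintype.card K) =>
        if hm : (m : ℕ) < n then f ⟨m, hm⟩ else 0)]
      exact sum_dite_le hnk f
    refine ⟨(fun i => if hm : ((e i : Fin (Fintype.card K)) : ℕ) < n then α ⟨e i, hm⟩ else 0,
      fun i => if hm : ((e i : Fin (Fintype.card K)) : ℕ) < n then ξs ⟨e i, hm⟩ else unif K),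
      ⟨fun i => ?_, ?_, fun i => ?_, fun ℓ => ?_⟩, ?_⟩
    · dsimp only; split
      · exact h0 _
      · exact le_refl 0
    · dsimp only; rw [key α]; exact h1
    · dsimp only; split
      · exact hmem _
      · exact unif_mem
    · dsimp only
      rw [show (fun i : K => (if hm : ((e i : Fin (Fintype.card K)) : ℕ) < n then α ⟨e i, hm⟩ else 0) *
            (if hm : ((e i : Fin (Fintype.card K)) : ℕ) < n then ξs ⟨e i, hm⟩ else unif K) ℓ)
          = fun i : K => if hm : ((e i : Fin (Fintype.card K)) : ℕ) < n then α ⟨e i, hm⟩ * ξs ⟨e i, hm⟩ ℓ else 0 by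
          funext i; split <;> simp]
      rw [key (fun j => α j * ξs j ℓ)]
      exact hmix ℓ
    · rw [show FG g (fun i => if hm : ((e i : Fin (Fintype.card K)) : ℕ) < n then α ⟨e i, hm⟩ else 0,
          fun i => if hm : ((e i : Fin (Fintype.card K)) : ℕ) < n then ξs ⟨e i, hm⟩ else unif K)
          = ∑ i : K, if hm : ((e i : Fin (Fintype.card K)) : ℕ) < n then α ⟨e i, hm⟩ * g (ξs ⟨e i, hm⟩) else 0 by
          refine Finset.sum_congr rfl fun i _ => ?_
          dsimp only; split
          · rename_i hm; rw [max_eq_left (h0 _)]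
          · simp]
      rw [key (fun j => α j * g (ξs j))]
  · -- more than |K| points: find a pivot and reduce
    push_neg at hnk
    obtain ⟨m, rfl⟩ : ∃ m, n = m + 1 := by
      refine ⟨n - 1, ?_⟩
      have : 0 < n := lt_of_le_of_lt (Nat.zero_le _) hnk
      omega
    have hni : ¬ LinearIndependent ℝ ξs := by
      intro h
      have hcard := h.fintype_card_le_finrank
      rw [Fintype.card_fin, Module.finrank_fintype_fun_eq_card] at hcard
      omega
    obtain ⟨c, hc, j₁, hj₁⟩ := Fintype.not_linearIndependent_iff.1 hni
    have hcℓ : ∀ ℓ, ∑ j, c j * ξs j ℓ = 0 := by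
      intro ℓ
      have h2 := congrFun hc ℓ
      simpa [Finset.sum_apply, Pi.smul_apply, smul_eq_mul] using h2
    have hcsum : ∑ j, c j = 0 := by
      have h3 : ∑ j, c j = ∑ j, c j * ∑ ℓ, ξs j ℓ :=
        Finset.sum_congr rfl fun j _ => by rw [(hmem j).2, mul_one]
      rw [h3]
      have h4 : ∑ j, c j * ∑ ℓ, ξs j ℓ = ∑ j, ∑ ℓ, c j * ξs j ℓ :=
        Finset.sum_congr rfl fun j _ => Finset.mul_sum _ _ _
      rw [h4, Finset.sum_comm]
      simp [hcℓ]
    -- choose a direction that does not decrease the payoff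
    obtain ⟨d, hd1, hd2, hd3, hd4⟩ :
        ∃ d : Fin (m + 1) → ℝ, (∀ ℓ, ∑ j, d j * ξs j ℓ = 0) ∧ (∑ j, d j = 0) ∧
          (0 ≤ ∑ j, d j * g (ξs j)) ∧ d j₁ ≠ 0 := by
      rcases le_or_gt 0 (∑ j, c j * g (ξs j)) with h5 | h5
      · exact ⟨c, hcℓ, hcsum, h5, hj₁⟩
      · refine ⟨-c, fun ℓ => ?_, ?_, ?_, by simpa using hj₁⟩
        · simp only [Pi.neg_apply, neg_mul]
          rw [Finset.sum_neg_distrib, hcℓ ℓ, neg_zero]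
        · rw [show (∑ j, (-c) j) = -∑ j, c j by simp [Finset.sum_neg_distrib], hcsum, neg_zero]
        · have : (∑ j, (-c) j * g (ξs j)) = -∑ j, c j * g (ξs j) := by
            simp [Finset.sum_neg_distrib, neg_mul]
          rw [this]; linarith
    have hneg : ∃ j, d j < 0 := by
      by_contra h6
      push_neg at h6
      have h7 := (Finset.sum_eq_zero_iff_of_nonneg (fun j _ => h6 j)).1 hd2
      exact hd4 (h7 j₁ (Finset.mem_univ _))
    set S := Finset.univ.filter (fun j => d j < 0) with hS
    have hSne : S.Nonempty := ⟨hneg.choose, by simp [hS, hneg.choose_spec]⟩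
    obtain ⟨j₀, hj₀S, hj₀min⟩ := S.exists_min_image (fun j => α j / (-d j)) hSne
    have hdj₀ : d j₀ < 0 := (Finset.mem_filter.1 hj₀S).2
    set t := α j₀ / (-d j₀) with htdef
    have ht0 : 0 ≤ t := div_nonneg (h0 j₀) (by linarith)
    set α' := fun j => α j + t * d j with hα'
    have hα'0 : ∀ j, 0 ≤ α' j := by
      intro j
      rcases lt_or_ge (d j) 0 with h8 | h8
      · have hjS : j ∈ S := Finset.mem_filter.2 ⟨Finset.mem_univ _, h8⟩
        have h9 := hj₀min j hjS
        rw [le_div_iff₀ (by linarith : (0:ℝ) < -d j)] at h9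
        simp only [hα']
        nlinarith
      · exact add_nonneg (h0 j) (mul_nonneg ht0 h8)
    have hα'j₀ : α' j₀ = 0 := by
      have hdj₀ne : d j₀ ≠ 0 := ne_of_lt hdj₀
      simp only [hα', htdef]
      have h11 : α j₀ * d j₀ / -d j₀ = -α j₀ := by
        rw [div_neg, mul_div_assoc, div_self hdj₀ne, mul_one]
      field_simp
      linarith [h11]
    have hα'1 : ∑ j, α' j = 1 := by
      simp only [hα']
      rw [Finset.sum_add_distrib, ← Finset.mul_sum, hd2, mul_zero, add_zero, h1]
    have hα'mix : ∀ ℓ, ∑ j, α' j * ξs j ℓ = ξ ℓ := by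
      intro ℓ
      have : ∀ j, α' j * ξs j ℓ = α j * ξs j ℓ + t * (d j * ξs j ℓ) := by
        intro j; simp only [hα']; ring
      rw [Finset.sum_congr rfl fun j _ => this j, Finset.sum_add_distrib,
        ← Finset.mul_sum, hd1 ℓ, mul_zero, add_zero]
      exact hmix ℓ
    have hα'pay : (∑ j, α j * g (ξs j)) ≤ ∑ j, α' j * g (ξs j) := by
      have : ∀ j, α' j * g (ξs j) = α j * g (ξs j) + t * (d j * g (ξs j)) := by
        intro j; simp only [hα']; ring
      rw [Finset.sum_congr rfl fun j _ => this j, Finset.sum_add_distrib, ← Finset.mul_sum]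
      nlinarith
    -- drop index j₀
    obtain ⟨p, hpA, hppay⟩ := ih m (by omega) (fun j => α' (j₀.succAbove j))
      (fun j => ξs (j₀.succAbove j)) (fun j => hα'0 _)
      (by
        have h10 := Fin.sum_univ_succAbove (fun j => α' j) j₀
        rw [hα'j₀, zero_add] at h10
        rw [← h10]; exact hα'1)
      (fun j => hmem _)
      (by
        intro ℓ
        have h10 := Fin.sum_univ_succAbove (fun j => α' j * ξs j ℓ) j₀
        rw [hα'j₀, zero_mul, zero_add] at h10
        rw [← h10]; exact hα'mix ℓ)
    refine ⟨p, hpA, le_trans hα'pay (le_trans (le_of_eq ?_) hppay)⟩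
    have h10 := Fin.sum_univ_succAbove (fun j => α' j * g (ξs j)) j₀
    rw [hα'j₀, zero_mul, zero_add] at h10
    exact h10

lemma usc_mul {X : Type*} [TopologicalSpace X] {f q : X → ℝ}
    (hf : Continuous f) (hf0 : ∀ x, 0 ≤ f x) (hq : UpperSemicontinuous q)
    (hq0 : ∀ x, 0 ≤ q x) : UpperSemicontinuous (fun x => f x * q x) := by
  intro x y hy
  have hfx := hf0 x
  have hqx := hq0 x
  set ε := min 1 ((y - f x * q x) / (f x + q x + 2)) with hε
  have hεpos : 0 < ε := lt_min one_pos (div_pos (by dsimp only at hy; linarith) (by linarith))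
  have hε1 : ε ≤ 1 := min_le_left _ _
  have hε2 : ε ≤ (y - f x * q x) / (f x + q x + 2) := min_le_right _ _
  have hkey : (f x + ε) * (q x + ε) < y := by
    have h3 : ε * (f x + q x + 2) ≤ y - f x * q x :=
      (le_div_iff₀ (by linarith : (0:ℝ) < f x + q x + 2)).1 hε2
    nlinarith
  have h1 : ∀ᶠ z in 𝓝 x, f z < f x + ε :=
    (hf.tendsto x).eventually (eventually_lt_nhds (by linarith))
  have h2 : ∀ᶠ z in 𝓝 x, q z < q x + ε := hq x (q x + ε) (by linarith)
  filter_upwards [h1, h2] with z h1z h2z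
  have := hf0 z
  have := hq0 z
  nlinarith

lemma usc_indicator_of_nonneg {f : (K → ℝ) → ℝ}
    (hf : UpperSemicontinuousOn f (stdSimplex ℝ K))
    (h0 : ∀ x ∈ stdSimplex ℝ K, 0 ≤ f x) :
    UpperSemicontinuous ((stdSimplex ℝ K).indicator f) := by
  intro x y hy
  by_cases hx : x ∈ stdSimplex ℝ K
  · rw [Set.indicator_of_mem hx] at hy
    have hy0 : 0 < y := lt_of_le_of_lt (h0 x hx) hy
    have h1 := hf x hx y hy
    rw [← nhdsWithin_univ, ← Set.union_compl_self (stdSimplex ℝ K), nhdsWithin_union,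
      Filter.eventually_sup]
    constructor
    · filter_upwards [h1, self_mem_nhdsWithin] with z h1z hz
      rwa [Set.indicator_of_mem hz]
    · filter_upwards [self_mem_nhdsWithin] with z hz
      rw [Set.indicator_of_notMem hz]; exact hy0
  · rw [Set.indicator_of_notMem hx] at hy
    have hev : ∀ᶠ z in 𝓝 x, z ∈ (stdSimplex ℝ K)ᶜ :=
      (isClosed_stdSimplex ℝ K).isOpen_compl.mem_nhds hx
    filter_upwards [hev] with z hz
    rw [Set.indicator_of_notMem hz]; exact hy

lemma aset_closed : IsClosed (ASet ξ) := by
  have hrep : ASet ξ = ({p : (K → ℝ) × (K → K → ℝ) | ∀ i, 0 ≤ p.1 i}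
      ∩ {p | ∑ i, p.1 i = 1})
      ∩ ({p | ∀ i, p.2 i ∈ stdSimplex ℝ K} ∩ {p | ∀ ℓ, ∑ i, p.1 i * p.2 i ℓ = ξ ℓ}) := by
    ext p; simp only [ASet, Set.mem_setOf_eq, Set.mem_inter_iff]; tauto
  rw [hrep]
  have c1 : ∀ i : K, Continuous (fun p : (K → ℝ) × (K → K → ℝ) => p.1 i) :=
    fun i => (continuous_apply i).comp continuous_fst
  have c2 : ∀ i : K, Continuous (fun p : (K → ℝ) × (K → K → ℝ) => p.2 i) :=
    fun i => (continuous_apply i).comp continuous_snd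
  refine IsClosed.inter (IsClosed.inter ?_ ?_) (IsClosed.inter ?_ ?_)
  · rw [Set.setOf_forall]
    exact isClosed_iInter fun i => isClosed_le continuous_const (c1 i)
  · exact isClosed_eq (continuous_finset_sum _ fun i _ => c1 i) continuous_const
  · rw [Set.setOf_forall]
    exact isClosed_iInter fun i => (isClosed_stdSimplex ℝ K).preimage (c2 i)
  · rw [Set.setOf_forall]
    exact isClosed_iInter fun ℓ => isClosed_eq
      (continuous_finset_sum _ fun i _ => (c1 i).mul ((continuous_apply ℓ).comp (c2 i)))
      continuous_const

lemma aset_subset : ASet ξ ⊆ (Set.univ.pi fun _ : K => Set.Icc (0:ℝ) 1) ×ˢ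
    (Set.univ.pi fun _ : K => stdSimplex ℝ K) := by
  rintro p ⟨hp0, hp1, hpm, _⟩
  refine Set.mem_prod.2 ⟨Set.mem_univ_pi.2 fun i => ?_, Set.mem_univ_pi.2 fun i => hpm i⟩
  refine Set.mem_Icc.2 ⟨hp0 i, ?_⟩
  rw [← hp1]
  exact Finset.single_le_sum (fun j _ => hp0 j) (Finset.mem_univ i)

lemma aset_compact : IsCompact (ASet ξ) := by
  have hsub := aset_subset (ξ := ξ)
  exact IsCompact.of_isClosed_subset
    (((isCompact_univ_pi fun _ : K => isCompact_Icc (a := (0:ℝ)) (b := 1))).prod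
      (isCompact_univ_pi fun _ : K => isCompact_stdSimplex ℝ K)) aset_closed hsub

lemma FG_usc (hgu : UpperSemicontinuous g) (hg0 : ∀ x, 0 ≤ g x) :
    UpperSemicontinuous (FG g) := by
  have := upperSemicontinuous_sum (a := (Finset.univ : Finset K))
    (f := fun i (p : (K → ℝ) × (K → K → ℝ)) => max (p.1 i) 0 * g (p.2 i))
    (fun i _ => usc_mul (((continuous_apply i).comp continuous_fst).max continuous_const)
      (fun p => le_max_right _ _)
      (UpperSemicontinuous.comp hgu ((continuous_apply i).comp continuous_snd))
      (fun p => hg0 _))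
  exact this

lemma att (hgu : UpperSemicontinuous g) (hg0 : ∀ x, 0 ≤ g x) (hgB : ∀ x, g x ≤ B)
    (hξ : ξ ∈ stdSimplex ℝ K) : ∃ p ∈ ASet ξ, FG g p = PhiG g ξ := by
  classical
  set T : ℕ → Set ((K → ℝ) × (K → K → ℝ)) :=
    fun n => {p | p ∈ ASet ξ ∧ PhiG g ξ - 1 / (n + 1) ≤ FG g p} with hT
  have hne : ∀ n, (T n).Nonempty := by
    intro n
    have hpos : (0:ℝ) < 1 / (n + 1) := by positivity
    have hc : PhiG g ξ - 1 / (n + 1) < PhiG g ξ := by linarith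
    obtain ⟨m, α, ξs, h0, h1, hmem, hmix, hval⟩ := exists_finsplit hg0 hgB hξ hc
    obtain ⟨p, hpA, hple⟩ := reduce hg0 m α ξs h0 h1 hmem hmix
    exact ⟨p, hpA, le_of_lt (lt_of_lt_of_le hval hple)⟩
  have hcl : ∀ n, IsClosed (T n) := by
    intro n
    have hrep : T n = ASet ξ ∩ (FG g ⁻¹' Set.Ici (PhiG g ξ - 1 / (n + 1))) := by
      ext p
      simp only [hT, Set.mem_setOf_eq, Set.mem_inter_iff, Set.mem_preimage, Set.mem_Ici]
    rw [hrep]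
    exact aset_closed.inter ((FG_usc hgu hg0).isClosed_preimage _)
  have hdec : ∀ n, T (n + 1) ⊆ T n := by
    intro n p hp
    refine ⟨hp.1, le_trans ?_ hp.2⟩
    have h1 : (1:ℝ) / (↑(n+1) + 1) ≤ 1 / (↑n + 1) := by
      apply one_div_le_one_div_of_le (by positivity)
      push_cast; linarith
    linarith
  obtain ⟨p, hp⟩ := IsCompact.nonempty_iInter_of_sequence_nonempty_isCompact_isClosed T hdec hne
    (aset_compact.of_isClosed_subset (hcl 0) (fun q hq => hq.1)) hcl
  have hpA : p ∈ ASet ξ := (Set.mem_iInter.1 hp 0).1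
  refine ⟨p, hpA, le_antisymm (FG_le_phiG hg0 hgB hpA) ?_⟩
  by_contra hlt
  push_neg at hlt
  obtain ⟨n, hn⟩ := exists_nat_one_div_lt (show (0:ℝ) < PhiG g ξ - FG g p by linarith)
  have := (Set.mem_iInter.1 hp n).2
  linarith


lemma phiG_usc (hgu : UpperSemicontinuous g) (hg0 : ∀ x, 0 ≤ g x) (hgB : ∀ x, g x ≤ B) :
    UpperSemicontinuousOn (PhiG g) (stdSimplex ℝ K) := by
  intro x hx y hy
  by_contra hev
  rw [Filter.not_eventually] at hev
  have hfreq : ∃ᶠ z in 𝓝[stdSimplex ℝ K] x, z ∈ {z | z ∈ stdSimplex ℝ K ∧ y ≤ PhiG g z} := by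
    refine (hev.and_eventually self_mem_nhdsWithin).mono ?_
    rintro z ⟨hz1, hz2⟩
    exact ⟨hz2, not_lt.1 hz1⟩
  have hxcl : x ∈ closure {z | z ∈ stdSimplex ℝ K ∧ y ≤ PhiG g z} := by
    rw [mem_closure_iff_frequently]
    exact (Filter.Frequently.filter_mono hfreq nhdsWithin_le_nhds)
  obtain ⟨z, hzmem, hztend⟩ := mem_closure_iff_seq_limit.1 hxcl
  choose p hpA hpF using fun n => att hgu hg0 hgB (hzmem n).1
  have hpB : ∀ n, p n ∈ (Set.univ.pi fun _ : K => Set.Icc (0:ℝ) 1) ×ˢ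
      (Set.univ.pi fun _ : K => stdSimplex ℝ K) := fun n => aset_subset (hpA n)
  obtain ⟨q, _, φ, hφ, hqt⟩ := IsCompact.tendsto_subseq
    (((isCompact_univ_pi fun _ : K => isCompact_Icc (a := (0:ℝ)) (b := 1))).prod
      (isCompact_univ_pi fun _ : K => isCompact_stdSimplex ℝ K)) hpB
  have hc1 : ∀ i : K, Continuous (fun p : (K → ℝ) × (K → K → ℝ) => p.1 i) :=
    fun i => (continuous_apply i).comp continuous_fst
  have hc2 : ∀ i : K, Continuous (fun p : (K → ℝ) × (K → K → ℝ) => p.2 i) :=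
    fun i => (continuous_apply i).comp continuous_snd
  have hqA : q ∈ ASet x := by
    refine ⟨fun i => ?_, ?_, fun i => ?_, fun ℓ => ?_⟩
    · exact ge_of_tendsto' (((hc1 i).tendsto q).comp hqt)
        (fun n => (hpA (φ n)).1 i)
    · refine tendsto_nhds_unique (((continuous_finset_sum Finset.univ
        fun i _ => hc1 i).tendsto q).comp hqt) ?_
      exact Filter.Tendsto.congr (fun n => ((hpA (φ n)).2.1).symm) tendsto_const_nhds
    · exact (isClosed_stdSimplex ℝ K).mem_of_tendsto (((hc2 i).tendsto q).comp hqt)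
        (Filter.Eventually.of_forall fun n => (hpA (φ n)).2.2.1 i)
    · have hcm : Continuous (fun p : (K → ℝ) × (K → K → ℝ) => ∑ i, p.1 i * p.2 i ℓ) :=
        continuous_finset_sum _ fun i _ => (hc1 i).mul ((continuous_apply ℓ).comp (hc2 i))
      refine tendsto_nhds_unique ((hcm.tendsto q).comp hqt) ?_
      exact Filter.Tendsto.congr (fun n => ((hpA (φ n)).2.2.2 ℓ).symm)
        (((continuous_apply ℓ).tendsto x).comp (hztend.comp hφ.tendsto_atTop))
  have hFGq : y ≤ FG g q := by
    by_contra hlt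
    push_neg at hlt
    have hev2 := (FG_usc hgu hg0) q y hlt
    have hev3 := hqt.eventually hev2
    obtain ⟨n, hn⟩ := hev3.exists
    have := (hzmem (φ n)).2
    rw [← hpF (φ n)] at this
    exact absurd hn (not_lt.2 this)
  exact absurd (le_trans hFGq (FG_le_phiG hg0 hgB hqA)) (not_le.2 hy)

lemma phiG_le_of_le {g₁ g₂ : (K → ℝ) → ℝ} {B₁ B₂ c : ℝ}
    (hg10 : ∀ x, 0 ≤ g₁ x) (hg1B : ∀ x, g₁ x ≤ B₁)
    (hg20 : ∀ x, 0 ≤ g₂ x) (hg2B : ∀ x, g₂ x ≤ B₂)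
    (h : ∀ x ∈ stdSimplex ℝ K, g₁ x ≤ g₂ x + c) (hξ : ξ ∈ stdSimplex ℝ K) :
    PhiG g₁ ξ ≤ PhiG g₂ ξ + c := by
  refine csSup_le (phiSet_nonempty hξ) ?_
  rintro r ⟨α, ξs, hsp, rfl⟩
  have hs1 : Summable (fun s => α s * g₁ (ξs s)) := summable_payoff hg10 hg1B hsp
  have hs2 : Summable (fun s => α s * g₂ (ξs s)) := summable_payoff hg20 hg2B hsp
  have hsc : Summable (fun s => α s * c) := (summable_of_split hsp).mul_right c
  have hle : (∑' s, α s * g₁ (ξs s)) ≤ ∑' s, (α s * g₂ (ξs s) + α s * c) := by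
    refine Summable.tsum_le_tsum (fun s => ?_) hs1 (hs2.add hsc)
    have := h (ξs s) (hsp.2.1 s)
    nlinarith [hsp.1 s]
  rw [Summable.tsum_add hs2 hsc, tsum_mul_right, hsp.2.2.1, one_mul] at hle
  exact le_trans hle (add_le_add_left
    (le_csSup (phiSet_bddAbove hg20 hg2B) ⟨α, ξs, hsp, rfl⟩) c)

end Abstract

section Concrete

variable {M : Matrix K K ℝ} (hM : IsStochastic M) {u : (K → ℝ) → ℝ} {C : ℝ} {δ : ℝ}

lemma vecMul_mem (hM : IsStochastic M) {x : K → ℝ} (hx : x ∈ stdSimplex ℝ K) :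
    Matrix.vecMul x M ∈ stdSimplex ℝ K := by
  constructor
  · intro j
    have : Matrix.vecMul x M j = ∑ i, x i * M i j := rfl
    rw [this]
    exact Finset.sum_nonneg fun i _ => mul_nonneg (hx.1 i) (hM.1 i j)
  · have : ∀ j, Matrix.vecMul x M j = ∑ i, x i * M i j := fun j => rfl
    rw [Finset.sum_congr rfl fun j _ => this j, Finset.sum_comm]
    rw [Finset.sum_congr rfl (fun i (_ : i ∈ Finset.univ) => by
      rw [← Finset.mul_sum, hM.2 i, mul_one])]
    exact hx.2

/-- the globalized one-stage payoff associated to a (globalized) continuation value `w` -/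
def gfun (M : Matrix K K ℝ) (u : (K → ℝ) → ℝ) (δ : ℝ) (w : (K → ℝ) → ℝ) : (K → ℝ) → ℝ :=
  fun x => (1 - δ) * (stdSimplex ℝ K).indicator u x + δ * w (Matrix.vecMul x M)

section gprops

variable (hu0 : ∀ ξ ∈ stdSimplex ℝ K, 0 ≤ u ξ) (huC : ∀ ξ ∈ stdSimplex ℝ K, u ξ ≤ C)
  (hδ0 : 0 ≤ δ) (hδ1 : δ < 1) (hC0 : 0 ≤ C)

include hu0 hδ1 in
lemma gfun_nonneg {w : (K → ℝ) → ℝ} (hw0 : ∀ x, 0 ≤ w x) (hδ0 : 0 ≤ δ) :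
    ∀ x, 0 ≤ gfun M u δ w x := by
  intro x
  have h1 : 0 ≤ (stdSimplex ℝ K).indicator u x := Set.indicator_nonneg hu0 x
  have h2 : 0 ≤ w (Matrix.vecMul x M) := hw0 _
  have h3 : (0:ℝ) ≤ 1 - δ := by linarith
  exact add_nonneg (mul_nonneg h3 h1) (mul_nonneg hδ0 h2)

include hu0 huC hδ0 hδ1 hC0 in
lemma gfun_le {w : (K → ℝ) → ℝ} (hwC : ∀ x, w x ≤ C) :
    ∀ x, gfun M u δ w x ≤ C := by
  intro x
  have h1 : (stdSimplex ℝ K).indicator u x ≤ C := by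
    by_cases hx : x ∈ stdSimplex ℝ K
    · rw [Set.indicator_of_mem hx]; exact huC x hx
    · rw [Set.indicator_of_notMem hx]; exact hC0
  have h2 : w (Matrix.vecMul x M) ≤ C := hwC _
  have h3 : (0:ℝ) ≤ 1 - δ := by linarith
  have : gfun M u δ w x = (1 - δ) * (stdSimplex ℝ K).indicator u x
      + δ * w (Matrix.vecMul x M) := rfl
  rw [this]
  nlinarith [Set.indicator_nonneg hu0 x]

include hu0 hδ0 hδ1 in
lemma gfun_usc (husc : UpperSemicontinuousOn u (stdSimplex ℝ K)) {w : (K → ℝ) → ℝ}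
    (hwu : UpperSemicontinuous w) (hw0 : ∀ x, 0 ≤ w x) (hwC : ∀ x, w x ≤ C) :
    UpperSemicontinuous (gfun M u δ w) := by
  have hvm : Continuous (fun x : K → ℝ => Matrix.vecMul x M) :=
    Continuous.matrix_vecMul continuous_id continuous_const
  refine UpperSemicontinuous.add ?_ ?_
  · exact usc_mul continuous_const (fun _ => by linarith)
      (usc_indicator_of_nonneg husc hu0) (Set.indicator_nonneg hu0)
  · exact usc_mul continuous_const (fun _ => hδ0)
      (UpperSemicontinuous.comp hwu hvm) (fun x => hw0 _)

end gprops

include hM in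
/-- the split payoff with continuation value `w` agrees with the abstract payoff for the
globalization `W`, provided `W = w` on the simplex. -/
lemma payoff_eq {w W : (K → ℝ) → ℝ} (hW : ∀ x ∈ stdSimplex ℝ K, W x = w x)
    {α : ℕ → ℝ} {ξs : ℕ → K → ℝ} (hsp : ∀ s, ξs s ∈ stdSimplex ℝ K) :
    splitPayoff M u δ w α ξs = ∑' s, α s * gfun M u δ W (ξs s) := by
  refine tsum_congr fun s => ?_
  rw [gfun, Set.indicator_of_mem (hsp s), hW _ (vecMul_mem hM (hsp s))]

include hM in
lemma phiSet_eq {w W : (K → ℝ) → ℝ} (hW : ∀ x ∈ stdSimplex ℝ K, W x = w x) (ξ : K → ℝ) :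
    {r : ℝ | ∃ α ξs, IsSplit ξ α ξs ∧ r = splitPayoff M u δ w α ξs}
      = PhiSet (gfun M u δ W) ξ := by
  ext r
  constructor
  · rintro ⟨α, ξs, hsp, rfl⟩
    exact ⟨α, ξs, hsp, payoff_eq hM hW hsp.2.1⟩
  · rintro ⟨α, ξs, hsp, rfl⟩
    exact ⟨α, ξs, hsp, (payoff_eq hM hW hsp.2.1).symm⟩

end Concrete

end MPAux

open MPAux

theorem markovian_persuasion_bellman_attained_by_finite_split
    {K : Type*} [Fintype K] [Nonempty K]
    (M : Matrix K K ℝ) (hM : IsStochastic M)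
    (u : (K → ℝ) → ℝ) (hu0 : ∀ ξ ∈ stdSimplex ℝ K, 0 ≤ u ξ)
    (husc : UpperSemicontinuousOn u (stdSimplex ℝ K))
    (C : ℝ) (hC : IsLUB (u '' stdSimplex ℝ K) C)
    (v : ℝ → (K → ℝ) → ℝ) (hv : IsValueFamily M u C v) :
    ∀ δ : ℝ, 0 ≤ δ → δ < 1 → ∀ ξ ∈ stdSimplex ℝ K,
      ∃ (α : K → ℝ) (ξs : K → (K → ℝ)),
        (∀ i, 0 ≤ α i) ∧ (∑ i, α i = 1) ∧
        (∀ i, ξs i ∈ stdSimplex ℝ K) ∧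
        (∀ ℓ, (∑ i, α i * ξs i ℓ) = ξ ℓ) ∧
        v δ ξ = ∑ i, α i * ((1 - δ) * u (ξs i) + δ * v δ (Matrix.vecMul (ξs i) M)) := by
  intro δ hδ0 hδ1 ξ hξ
  classical
  obtain ⟨hbd, hbell⟩ := hv δ ⟨hδ0, hδ1⟩
  set V : (K → ℝ) → ℝ := v δ with hV
  have hC0 : 0 ≤ C := le_trans (hu0 _ unif_mem) (hC.1 ⟨_, unif_mem, rfl⟩)
  have huC : ∀ x ∈ stdSimplex ℝ K, u x ≤ C := fun x hx => hC.1 ⟨x, hx, rfl⟩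
  -- the value iterate
  set T : ℕ → (K → ℝ) → ℝ := fun n => Nat.rec (fun _ => 0)
    (fun _ w => (stdSimplex ℝ K).indicator (PhiG (gfun M u δ w))) n with hT
  have hTsucc : ∀ n, T (n + 1)
      = (stdSimplex ℝ K).indicator (PhiG (gfun M u δ (T n))) := fun n => rfl
  -- basic properties of the iterates
  have hTprop : ∀ n, (∀ x, 0 ≤ T n x) ∧ (∀ x, T n x ≤ C) ∧ UpperSemicontinuous (T n) := by
    intro n
    induction n with
    | zero => exact ⟨fun x => le_refl 0, fun x => hC0, upperSemicontinuous_const⟩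
    | succ n ih =>
      obtain ⟨ih0, ihC, ihusc⟩ := ih
      have hg0 : ∀ x, 0 ≤ gfun M u δ (T n) x := gfun_nonneg hu0 hδ1 ih0 hδ0
      have hgC : ∀ x, gfun M u δ (T n) x ≤ C := gfun_le hu0 huC hδ0 hδ1 hC0 ihC
      have hgusc : UpperSemicontinuous (gfun M u δ (T n)) :=
        gfun_usc hu0 hδ0 hδ1 husc ihusc ih0 ihC
      rw [hTsucc n]
      refine ⟨fun x => Set.indicator_nonneg (fun z hz => phiG_nonneg hg0 hgC hz) x,
        fun x => ?_, usc_indicator_of_nonneg (phiG_usc hgusc hg0 hgC)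
          (fun z hz => phiG_nonneg hg0 hgC hz)⟩
      by_cases hx : x ∈ stdSimplex ℝ K
      · rw [Set.indicator_of_mem hx]; exact phiG_le hg0 hgC hx
      · rw [Set.indicator_of_notMem hx]; exact hC0
  -- the globalized value and the Bellman equation in abstract form
  set W : (K → ℝ) → ℝ := (stdSimplex ℝ K).indicator V with hW
  have hWeq : ∀ x ∈ stdSimplex ℝ K, W x = V x := fun x hx => Set.indicator_of_mem hx V
  have hW0 : ∀ x, 0 ≤ W x := Set.indicator_nonneg (fun z hz => (hbd z hz).1)
  have hWC : ∀ x, W x ≤ C := by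
    intro x
    by_cases hx : x ∈ stdSimplex ℝ K
    · rw [hWeq x hx]; exact (hbd x hx).2
    · rw [hW, Set.indicator_of_notMem hx]; exact hC0
  have hgW0 : ∀ x, 0 ≤ gfun M u δ W x := gfun_nonneg hu0 hδ1 hW0 hδ0
  have hgWC : ∀ x, gfun M u δ W x ≤ C := gfun_le hu0 huC hδ0 hδ1 hC0 hWC
  have hbellman : ∀ z ∈ stdSimplex ℝ K, V z = PhiG (gfun M u δ W) z := by
    intro z hz
    rw [hbell z hz, PhiG, ← phiSet_eq hM hWeq z]
  -- contraction estimate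
  have hdist : ∀ n, ∀ x ∈ stdSimplex ℝ K, |T n x - V x| ≤ δ ^ n * C := by
    intro n
    induction n with
    | zero =>
      intro x hx
      rw [abs_le]
      have := hbd x hx
      constructor <;> simp [hT] <;> linarith [this.1, this.2]
    | succ n ih =>
      intro x hx
      obtain ⟨ih0, ihC, _⟩ := hTprop n
      have hg0 : ∀ z, 0 ≤ gfun M u δ (T n) z := gfun_nonneg hu0 hδ1 ih0 hδ0
      have hgC : ∀ z, gfun M u δ (T n) z ≤ C := gfun_le hu0 huC hδ0 hδ1 hC0 ihC
      have hle1 : ∀ z ∈ stdSimplex ℝ K,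
          gfun M u δ (T n) z ≤ gfun M u δ W z + δ * (δ ^ n * C) := by
        intro z hz
        have hmem := vecMul_mem hM hz
        have h1 := (abs_le.1 (ih _ hmem)).2
        have h2 : W (Matrix.vecMul z M) = V (Matrix.vecMul z M) := hWeq _ hmem
        have : gfun M u δ (T n) z - gfun M u δ W z
            = δ * (T n (Matrix.vecMul z M) - W (Matrix.vecMul z M)) := by
          rw [gfun, gfun]; ring
        nlinarith [this]
      have hle2 : ∀ z ∈ stdSimplex ℝ K,
          gfun M u δ W z ≤ gfun M u δ (T n) z + δ * (δ ^ n * C) := by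
        intro z hz
        have hmem := vecMul_mem hM hz
        have h1 := (abs_le.1 (ih _ hmem)).1
        have h2 : W (Matrix.vecMul z M) = V (Matrix.vecMul z M) := hWeq _ hmem
        have : gfun M u δ W z - gfun M u δ (T n) z
            = δ * (W (Matrix.vecMul z M) - T n (Matrix.vecMul z M)) := by
          rw [gfun, gfun]; ring
        nlinarith [this]
      have hub1 := phiG_le_of_le hg0 hgC hgW0 hgWC hle1 hx
      have hub2 := phiG_le_of_le hgW0 hgWC hg0 hgC hle2 hx
      rw [hTsucc n, Set.indicator_of_mem hx, hbellman x hx, abs_le]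
      have hpow : δ ^ (n + 1) * C = δ * (δ ^ n * C) := by rw [pow_succ]; ring
      constructor <;> linarith
  -- upper semicontinuity of the value on the simplex
  have hVusc : UpperSemicontinuousOn V (stdSimplex ℝ K) := by
    intro x hx y hy
    have hεpos : 0 < y - V x := by linarith
    obtain ⟨n, hn⟩ : ∃ n : ℕ, δ ^ n * C < (y - V x) / 3 := by
      obtain ⟨n, hn⟩ := exists_pow_lt_of_lt_one
        (show (0:ℝ) < ((y - V x) / 3) / (C + 1) by positivity) hδ1
      refine ⟨n, ?_⟩
      have h1 : δ ^ n * (C + 1) < (y - V x) / 3 :=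
        (lt_div_iff₀ (by linarith : (0:ℝ) < C + 1)).1 hn
      nlinarith [pow_nonneg hδ0 n]
    have h1 : ∀ᶠ z in 𝓝 x, T n z < T n x + (y - V x) / 3 :=
      (hTprop n).2.2 x _ (by linarith)
    have h2 : ∀ᶠ z in 𝓝[stdSimplex ℝ K] x, T n z < T n x + (y - V x) / 3 :=
      h1.filter_mono nhdsWithin_le_nhds
    filter_upwards [h2, self_mem_nhdsWithin] with z hz1 hz2
    have ha := (abs_le.1 (hdist n z hz2)).1
    have hb := (abs_le.1 (hdist n x hx)).2
    linarith
  -- attainment by a K-indexed split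
  have hWusc : UpperSemicontinuous W := by
    rw [hW]
    exact usc_indicator_of_nonneg hVusc (fun z hz => (hbd z hz).1)
  have hgWusc : UpperSemicontinuous (gfun M u δ W) :=
    gfun_usc hu0 hδ0 hδ1 husc hWusc hW0 hWC
  obtain ⟨p, hpA, hpF⟩ := att hgWusc hgW0 hgWC hξ
  obtain ⟨hp0, hp1, hpm, hpx⟩ := hpA
  refine ⟨p.1, p.2, hp0, hp1, hpm, hpx, ?_⟩
  rw [hbellman ξ hξ, ← hpF, FG]
  refine Finset.sum_congr rfl fun i _ => ?_
  rw [max_eq_left (hp0 i), gfun, Set.indicator_of_mem (hpm i),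
    hWeq _ (vecMul_mem hM (hpm i))]
end
end

section
/- For every probability vector π on K that is invariant for M (i.e., πM = π), the trajectory δ ↦ V_δ(π) is non-increasing on [0,1): for all δ₁, δ₂ with 0 ≤ δ₁ ≤ δ₂ < 1 one has V_{δ₂}(π) ≤ V_{δ₁}(π). -/
open scoped BigOperators

noncomputable section

/-- The total probability `χ(ξ)[i]` of action `i` under belief `ξ` and one-stage
strategy `χ`. -/
def actionProb {K I : Type*} [Fintype K] (ξ : K → ℝ) (χ : K → I → ℝ) (i : I) : ℝ :=
  ∑ ℓ, ξ ℓ * χ ℓ i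

/-- The posterior belief `ξ(χ,i)` of Player 2 upon observing action `i`
(junk value when `χ(ξ)[i] = 0`, in which case its weight in the Bellman
equation vanishes). -/
def posterior {K I : Type*} [Fintype K] (ξ : K → ℝ) (χ : K → I → ℝ) (i : I) (ℓ : K) : ℝ :=
  ξ ℓ * χ ℓ i / actionProb ξ χ i

/-- The one-stage payoff `r(ξ,χ)`: Player 2's best response payoff
`min_j Σ_ℓ ξ^ℓ Σ_i χ^ℓ[i] G^ℓ(i,j)`. -/
def onestagePayoff {K I J : Type*} [Fintype K] [Fintype I] [Fintype J] [Nonempty J]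
    (G : K → I → J → ℝ) (ξ : K → ℝ) (χ : K → I → ℝ) : ℝ :=
  ⨅ j : J, ∑ ℓ, ξ ℓ * ∑ i, χ ℓ i * G ℓ i j

/-- `V` is the family of δ-discounted values of the Markov chain game:
for each `δ ∈ [0,1)`, `V δ` is bounded between `0` and `C = ‖G‖∞` on `Δ(K)` and
satisfies the Bellman equation there. -/
def IsGameValueFamily {K I J : Type*} [Fintype K] [Fintype I] [Fintype J] [Nonempty J]
    (M : Matrix K K ℝ) (G : K → I → J → ℝ) (C : ℝ) (V : ℝ → (K → ℝ) → ℝ) : Prop :=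
  ∀ δ ∈ Set.Ico (0 : ℝ) 1,
    (∀ ξ ∈ stdSimplex ℝ K, 0 ≤ V δ ξ ∧ V δ ξ ≤ C) ∧
    ∀ ξ ∈ stdSimplex ℝ K,
      V δ ξ = sSup { x : ℝ | ∃ χ : K → I → ℝ, (∀ ℓ, χ ℓ ∈ stdSimplex ℝ I) ∧
        x = (1 - δ) * onestagePayoff G ξ χ +
            δ * ∑ i, actionProb ξ χ i * V δ (Matrix.vecMul (posterior ξ χ i) M) }

set_option linter.unusedSectionVars false

namespace MCGAux

variable {K I J : Type*} [Fintype K] [Fintype I] [Fintype J] [Nonempty I] [Nonempty J]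

theorem sum_actionProb {ξ : K → ℝ} {χ : K → I → ℝ} (hξ : ξ ∈ stdSimplex ℝ K)
    (hχ : ∀ ℓ, χ ℓ ∈ stdSimplex ℝ I) : ∑ i, actionProb ξ χ i = 1 := by
  unfold actionProb
  rw [Finset.sum_comm]
  have h : ∀ ℓ, ∑ i, ξ ℓ * χ ℓ i = ξ ℓ := fun ℓ => by
    rw [← Finset.mul_sum, (hχ ℓ).2, mul_one]
  simp_rw [h]
  exact hξ.2

theorem actionProb_nonneg {ξ : K → ℝ} {χ : K → I → ℝ} (hξ : ∀ ℓ, 0 ≤ ξ ℓ)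
    (hχ : ∀ ℓ i, 0 ≤ χ ℓ i) (i : I) : 0 ≤ actionProb ξ χ i :=
  Finset.sum_nonneg fun ℓ _ => mul_nonneg (hξ ℓ) (hχ ℓ i)

theorem term_eq_zero {ξ : K → ℝ} {χ : K → I → ℝ} (hξ : ∀ ℓ, 0 ≤ ξ ℓ)
    (hχ : ∀ ℓ i, 0 ≤ χ ℓ i) {i : I} (h : actionProb ξ χ i = 0) (ℓ : K) :
    ξ ℓ * χ ℓ i = 0 := by
  have := (Finset.sum_eq_zero_iff_of_nonneg
    (fun ℓ _ => mul_nonneg (hξ ℓ) (hχ ℓ i))).1 h ℓ (Finset.mem_univ ℓ)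
  exact this

theorem actionProb_mul_posterior {ξ : K → ℝ} {χ : K → I → ℝ} (hξ : ∀ ℓ, 0 ≤ ξ ℓ)
    (hχ : ∀ ℓ i, 0 ≤ χ ℓ i) (i : I) (ℓ : K) :
    actionProb ξ χ i * posterior ξ χ i ℓ = ξ ℓ * χ ℓ i := by
  by_cases h : actionProb ξ χ i = 0
  · rw [h, zero_mul, term_eq_zero hξ hχ h ℓ]
  · rw [posterior, mul_div_cancel₀ _ h]

theorem posterior_mem {ξ : K → ℝ} {χ : K → I → ℝ} (hξ : ξ ∈ stdSimplex ℝ K)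
    (hχ : ∀ ℓ, χ ℓ ∈ stdSimplex ℝ I) {i : I} (h : 0 < actionProb ξ χ i) :
    posterior ξ χ i ∈ stdSimplex ℝ K := by
  constructor
  · intro ℓ
    exact div_nonneg (mul_nonneg (hξ.1 ℓ) ((hχ ℓ).1 i)) h.le
  · unfold posterior
    rw [← Finset.sum_div]
    exact div_self h.ne'

theorem vecMul_mem {M : Matrix K K ℝ} (hM : IsStochastic M) {ξ : K → ℝ}
    (hξ : ξ ∈ stdSimplex ℝ K) : Matrix.vecMul ξ M ∈ stdSimplex ℝ K := by
  constructor
  · intro j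
    simp only [Matrix.vecMul, dotProduct]
    exact Finset.sum_nonneg fun ℓ _ => mul_nonneg (hξ.1 ℓ) (hM.1 ℓ j)
  · simp only [Matrix.vecMul, dotProduct]
    rw [Finset.sum_comm]
    have h : ∀ ℓ, ∑ j, ξ ℓ * M ℓ j = ξ ℓ := fun ℓ => by
      rw [← Finset.mul_sum, hM.2 ℓ, mul_one]
    simp_rw [h]
    exact hξ.2

theorem onestage_nonneg {G : K → I → J → ℝ} (hG : ∀ ℓ i j, 0 ≤ G ℓ i j) {ξ : K → ℝ}
    {χ : K → I → ℝ} (hξ : ∀ ℓ, 0 ≤ ξ ℓ) (hχ : ∀ ℓ i, 0 ≤ χ ℓ i) :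
    0 ≤ onestagePayoff G ξ χ :=
  le_ciInf fun j => Finset.sum_nonneg fun ℓ _ => mul_nonneg (hξ ℓ)
    (Finset.sum_nonneg fun i _ => mul_nonneg (hχ ℓ i) (hG ℓ i j))

theorem onestage_le {G : K → I → J → ℝ} {C : ℝ} (hGC : ∀ ℓ i j, G ℓ i j ≤ C)
    {ξ : K → ℝ} {χ : K → I → ℝ} (hξ : ξ ∈ stdSimplex ℝ K)
    (hχ : ∀ ℓ, χ ℓ ∈ stdSimplex ℝ I) : onestagePayoff G ξ χ ≤ C := by
  have j₀ : J := Classical.arbitrary J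
  refine ciInf_le_of_le (Set.Finite.bddBelow (Set.finite_range _)) j₀ ?_
  calc ∑ ℓ, ξ ℓ * ∑ i, χ ℓ i * G ℓ i j₀
      ≤ ∑ ℓ, ξ ℓ * C := by
        refine Finset.sum_le_sum fun ℓ _ => mul_le_mul_of_nonneg_left ?_ (hξ.1 ℓ)
        calc ∑ i, χ ℓ i * G ℓ i j₀ ≤ ∑ i, χ ℓ i * C :=
              Finset.sum_le_sum fun i _ =>
                mul_le_mul_of_nonneg_left (hGC ℓ i j₀) ((hχ ℓ).1 i)
          _ = C := by rw [← Finset.sum_mul, (hχ ℓ).2, one_mul]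
    _ = C := by rw [← Finset.sum_mul, hξ.2, one_mul]

end MCGAux

set_option linter.unusedSectionVars false

namespace MCGAux

variable {K I J : Type*} [Fintype K] [Fintype I] [Fintype J] [Nonempty I] [Nonempty J]

/-- The Bellman-type operator; `δ = 1` gives the "free information" operator. -/
def bell (M : Matrix K K ℝ) (G : K → I → J → ℝ) (δ : ℝ) (f : (K → ℝ) → ℝ) (ξ : K → ℝ) : ℝ :=
  sSup { x : ℝ | ∃ χ : K → I → ℝ, (∀ ℓ, χ ℓ ∈ stdSimplex ℝ I) ∧
    x = (1 - δ) * onestagePayoff G ξ χ +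
        δ * ∑ i, actionProb ξ χ i * f (Matrix.vecMul (posterior ξ χ i) M) }

/-- boundedness on the simplex -/
def Bdd (C : ℝ) (f : (K → ℝ) → ℝ) : Prop := ∀ ξ ∈ stdSimplex ℝ K, 0 ≤ f ξ ∧ f ξ ≤ C

/-- the uniform strategy, to witness nonemptiness -/
def unif : K → I → ℝ := fun _ _ => (Fintype.card I : ℝ)⁻¹

theorem unif_mem : ∀ ℓ : K, (unif (I := I) ℓ) ∈ stdSimplex ℝ I := by
  intro ℓ
  constructor
  · intro i; exact inv_nonneg.2 (Nat.cast_nonneg _)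
  · have hcard : (Fintype.card I : ℝ) ≠ 0 := Nat.cast_ne_zero.2 Fintype.card_ne_zero
    simp [unif, Finset.sum_const, Finset.card_univ, nsmul_eq_mul, mul_inv_cancel₀ hcard]

theorem cont_nonneg {M : Matrix K K ℝ} (hM : IsStochastic M) {f : (K → ℝ) → ℝ} {C : ℝ}
    (hf : Bdd C f) {ξ : K → ℝ} {χ : K → I → ℝ} (hξ : ξ ∈ stdSimplex ℝ K)
    (hχ : ∀ ℓ, χ ℓ ∈ stdSimplex ℝ I) :
    0 ≤ ∑ i, actionProb ξ χ i * f (Matrix.vecMul (posterior ξ χ i) M) := by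
  refine Finset.sum_nonneg fun i _ => ?_
  rcases eq_or_lt_of_le (actionProb_nonneg hξ.1 (fun ℓ i => (hχ ℓ).1 i) i) with h | h
  · rw [← h, zero_mul]
  · exact mul_nonneg h.le (hf _ (vecMul_mem hM (posterior_mem hξ hχ h))).1

theorem cont_le {M : Matrix K K ℝ} (hM : IsStochastic M) {f : (K → ℝ) → ℝ} {C : ℝ}
    (hf : Bdd C f) {ξ : K → ℝ} {χ : K → I → ℝ} (hξ : ξ ∈ stdSimplex ℝ K)
    (hχ : ∀ ℓ, χ ℓ ∈ stdSimplex ℝ I) :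
    ∑ i, actionProb ξ χ i * f (Matrix.vecMul (posterior ξ χ i) M) ≤ C := by
  have step : ∀ i, actionProb ξ χ i * f (Matrix.vecMul (posterior ξ χ i) M) ≤
      actionProb ξ χ i * C := by
    intro i
    rcases eq_or_lt_of_le (actionProb_nonneg hξ.1 (fun ℓ i => (hχ ℓ).1 i) i) with h | h
    · rw [← h, zero_mul, zero_mul]
    · exact mul_le_mul_of_nonneg_left (hf _ (vecMul_mem hM (posterior_mem hξ hχ h))).2 h.le
  calc ∑ i, actionProb ξ χ i * f (Matrix.vecMul (posterior ξ χ i) M)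
      ≤ ∑ i, actionProb ξ χ i * C := Finset.sum_le_sum fun i _ => step i
    _ = C := by rw [← Finset.sum_mul, sum_actionProb hξ hχ, one_mul]

theorem elt_nonneg {M : Matrix K K ℝ} (hM : IsStochastic M) {G : K → I → J → ℝ}
    (hG : ∀ ℓ i j, 0 ≤ G ℓ i j) {δ : ℝ} (hδ0 : 0 ≤ δ) (hδ1 : δ ≤ 1)
    {f : (K → ℝ) → ℝ} {C : ℝ} (hf : Bdd C f) {ξ : K → ℝ} {χ : K → I → ℝ}
    (hξ : ξ ∈ stdSimplex ℝ K) (hχ : ∀ ℓ, χ ℓ ∈ stdSimplex ℝ I) :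
    0 ≤ (1 - δ) * onestagePayoff G ξ χ +
        δ * ∑ i, actionProb ξ χ i * f (Matrix.vecMul (posterior ξ χ i) M) :=
  add_nonneg
    (mul_nonneg (by linarith) (onestage_nonneg hG hξ.1 fun ℓ i => (hχ ℓ).1 i))
    (mul_nonneg hδ0 (cont_nonneg hM hf hξ hχ))

theorem elt_le {M : Matrix K K ℝ} (hM : IsStochastic M) {G : K → I → J → ℝ} {C : ℝ}
    (hGC : ∀ ℓ i j, G ℓ i j ≤ C) {δ : ℝ} (hδ0 : 0 ≤ δ) (hδ1 : δ ≤ 1)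
    {f : (K → ℝ) → ℝ} (hf : Bdd C f) {ξ : K → ℝ} {χ : K → I → ℝ}
    (hξ : ξ ∈ stdSimplex ℝ K) (hχ : ∀ ℓ, χ ℓ ∈ stdSimplex ℝ I) :
    (1 - δ) * onestagePayoff G ξ χ +
        δ * ∑ i, actionProb ξ χ i * f (Matrix.vecMul (posterior ξ χ i) M) ≤ C := by
  have h1 : (1 - δ) * onestagePayoff G ξ χ ≤ (1 - δ) * C :=
    mul_le_mul_of_nonneg_left (onestage_le hGC hξ hχ) (by linarith)
  have h2 : δ * ∑ i, actionProb ξ χ i * f (Matrix.vecMul (posterior ξ χ i) M) ≤ δ * C :=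
    mul_le_mul_of_nonneg_left (cont_le hM hf hξ hχ) hδ0
  linarith

theorem bell_set_nonempty (M : Matrix K K ℝ) (G : K → I → J → ℝ) (δ : ℝ)
    (f : (K → ℝ) → ℝ) (ξ : K → ℝ) :
    { x : ℝ | ∃ χ : K → I → ℝ, (∀ ℓ, χ ℓ ∈ stdSimplex ℝ I) ∧
      x = (1 - δ) * onestagePayoff G ξ χ +
          δ * ∑ i, actionProb ξ χ i * f (Matrix.vecMul (posterior ξ χ i) M) }.Nonempty :=
  ⟨_, unif, unif_mem, rfl⟩

theorem bell_set_bddAbove {M : Matrix K K ℝ} (hM : IsStochastic M) {G : K → I → J → ℝ}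
    {C : ℝ} (hGC : ∀ ℓ i j, G ℓ i j ≤ C) {δ : ℝ} (hδ0 : 0 ≤ δ) (hδ1 : δ ≤ 1)
    {f : (K → ℝ) → ℝ} (hf : Bdd C f) {ξ : K → ℝ} (hξ : ξ ∈ stdSimplex ℝ K) :
    BddAbove { x : ℝ | ∃ χ : K → I → ℝ, (∀ ℓ, χ ℓ ∈ stdSimplex ℝ I) ∧
      x = (1 - δ) * onestagePayoff G ξ χ +
          δ * ∑ i, actionProb ξ χ i * f (Matrix.vecMul (posterior ξ χ i) M) } := by
  refine ⟨C, ?_⟩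
  rintro x ⟨χ, hχ, rfl⟩
  exact elt_le hM hGC hδ0 hδ1 hf hξ hχ

theorem bell_bdd {M : Matrix K K ℝ} (hM : IsStochastic M) {G : K → I → J → ℝ} {C : ℝ}
    (hG : ∀ ℓ i j, 0 ≤ G ℓ i j) (hGC : ∀ ℓ i j, G ℓ i j ≤ C) {δ : ℝ}
    (hδ0 : 0 ≤ δ) (hδ1 : δ ≤ 1) {f : (K → ℝ) → ℝ} (hf : Bdd C f) :
    Bdd C (bell M G δ f) := by
  intro ξ hξ
  constructor
  · refine le_csSup_of_le (bell_set_bddAbove hM hGC hδ0 hδ1 hf hξ) ⟨unif, unif_mem, rfl⟩ ?_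
    exact elt_nonneg hM hG hδ0 hδ1 hf hξ unif_mem
  · refine csSup_le (bell_set_nonempty M G δ f ξ) ?_
    rintro x ⟨χ, hχ, rfl⟩
    exact elt_le hM hGC hδ0 hδ1 hf hξ hχ

/-- the pairing / contraction-with-slack lemma -/
theorem bell_le_bell_add {M : Matrix K K ℝ} (hM : IsStochastic M) {G : K → I → J → ℝ}
    {C : ℝ} (hGC : ∀ ℓ i j, G ℓ i j ≤ C) {δ : ℝ} (hδ0 : 0 ≤ δ) (hδ1 : δ ≤ 1)
    {f g : (K → ℝ) → ℝ} (hg : Bdd C g) {B : ℝ}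
    (hfg : ∀ η ∈ stdSimplex ℝ K, f η ≤ g η + B) {ξ : K → ℝ} (hξ : ξ ∈ stdSimplex ℝ K) :
    bell M G δ f ξ ≤ bell M G δ g ξ + δ * B := by
  refine csSup_le (bell_set_nonempty M G δ f ξ) ?_
  rintro x ⟨χ, hχ, rfl⟩
  have key : ∑ i, actionProb ξ χ i * f (Matrix.vecMul (posterior ξ χ i) M) ≤
      (∑ i, actionProb ξ χ i * g (Matrix.vecMul (posterior ξ χ i) M)) + B := by
    have step : ∀ i, actionProb ξ χ i * f (Matrix.vecMul (posterior ξ χ i) M) ≤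
        actionProb ξ χ i * g (Matrix.vecMul (posterior ξ χ i) M) + actionProb ξ χ i * B := by
      intro i
      rcases eq_or_lt_of_le (actionProb_nonneg hξ.1 (fun ℓ i => (hχ ℓ).1 i) i) with h | h
      · rw [← h]; simp
      · have := hfg _ (vecMul_mem hM (posterior_mem hξ hχ h))
        nlinarith [h.le]
    calc ∑ i, actionProb ξ χ i * f (Matrix.vecMul (posterior ξ χ i) M)
        ≤ ∑ i, (actionProb ξ χ i * g (Matrix.vecMul (posterior ξ χ i) M) +
            actionProb ξ χ i * B) := Finset.sum_le_sum fun i _ => step i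
      _ = (∑ i, actionProb ξ χ i * g (Matrix.vecMul (posterior ξ χ i) M)) +
            (∑ i, actionProb ξ χ i) * B := by
          rw [Finset.sum_add_distrib, Finset.sum_mul]
      _ = _ := by rw [sum_actionProb hξ hχ, one_mul]
  have helt : (1 - δ) * onestagePayoff G ξ χ +
      δ * ∑ i, actionProb ξ χ i * g (Matrix.vecMul (posterior ξ χ i) M) ≤
      bell M G δ g ξ :=
    le_csSup (bell_set_bddAbove hM hGC hδ0 hδ1 hg hξ) ⟨χ, hχ, rfl⟩
  nlinarith [key]

end MCGAux

namespace MCGAux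

variable {K I J : Type*} [Fintype K] [Fintype I] [Fintype J] [Nonempty I] [Nonempty J]

theorem bell_concave {M : Matrix K K ℝ} (hM : IsStochastic M) {G : K → I → J → ℝ}
    {C : ℝ} (hG : ∀ ℓ i j, 0 ≤ G ℓ i j) (hGC : ∀ ℓ i j, G ℓ i j ≤ C) {δ : ℝ}
    (hδ0 : 0 ≤ δ) (hδ1 : δ ≤ 1) {f : (K → ℝ) → ℝ} (hf : Bdd C f)
    (hcf : ConcaveOn ℝ (stdSimplex ℝ K) f) :
    ConcaveOn ℝ (stdSimplex ℝ K) (bell M G δ f) := by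
  classical
  refine ⟨convex_stdSimplex ℝ K, ?_⟩
  intro ξ₁ hξ₁ ξ₂ hξ₂ a b ha hb hab
  rcases eq_or_lt_of_le ha with ha0 | ha
  · have hb1 : b = 1 := by linarith
    subst hb1; rw [← ha0]; simp
  rcases eq_or_lt_of_le hb with hb0 | hb
  · have ha1 : a = 1 := by linarith
    subst ha1; rw [← hb0]; simp
  have hξΔ : a • ξ₁ + b • ξ₂ ∈ stdSimplex ℝ K :=
    convex_stdSimplex ℝ K hξ₁ hξ₂ ha.le hb.le hab
  set ξ : K → ℝ := a • ξ₁ + b • ξ₂ with hξdef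
  have hξapp : ∀ ℓ, ξ ℓ = a * ξ₁ ℓ + b * ξ₂ ℓ := fun ℓ => by
    simp [hξdef, smul_eq_mul]
  -- the key claim
  have key : ∀ x₁ ∈ { x : ℝ | ∃ χ : K → I → ℝ, (∀ ℓ, χ ℓ ∈ stdSimplex ℝ I) ∧
      x = (1 - δ) * onestagePayoff G ξ₁ χ +
          δ * ∑ i, actionProb ξ₁ χ i * f (Matrix.vecMul (posterior ξ₁ χ i) M) },
      ∀ x₂ ∈ { x : ℝ | ∃ χ : K → I → ℝ, (∀ ℓ, χ ℓ ∈ stdSimplex ℝ I) ∧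
      x = (1 - δ) * onestagePayoff G ξ₂ χ +
          δ * ∑ i, actionProb ξ₂ χ i * f (Matrix.vecMul (posterior ξ₂ χ i) M) },
      a * x₁ + b * x₂ ≤ bell M G δ f ξ := by
    rintro x₁ ⟨χ₁, hχ₁, rfl⟩ x₂ ⟨χ₂, hχ₂, rfl⟩
    set χ : K → I → ℝ := fun ℓ i => if ξ ℓ = 0 then χ₁ ℓ i
      else (a * ξ₁ ℓ * χ₁ ℓ i + b * ξ₂ ℓ * χ₂ ℓ i) / ξ ℓ with hχdef
    have hzero : ∀ ℓ, ξ ℓ = 0 → ξ₁ ℓ = 0 ∧ ξ₂ ℓ = 0 := by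
      intro ℓ h
      have h1 := hξ₁.1 ℓ
      have h2 := hξ₂.1 ℓ
      have h3 := hξapp ℓ
      constructor <;> nlinarith
    have hkey : ∀ ℓ i, ξ ℓ * χ ℓ i = a * ξ₁ ℓ * χ₁ ℓ i + b * ξ₂ ℓ * χ₂ ℓ i := by
      intro ℓ i
      by_cases h : ξ ℓ = 0
      · obtain ⟨e1, e2⟩ := hzero ℓ h
        rw [h, e1, e2]; ring
      · simp only [hχdef, if_neg h]
        field_simp
    have hχmem : ∀ ℓ, χ ℓ ∈ stdSimplex ℝ I := by
      intro ℓ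
      constructor
      · intro i
        by_cases h : ξ ℓ = 0
        · simpa [hχdef, h] using (hχ₁ ℓ).1 i
        · simp only [hχdef, if_neg h]
          have hξℓ : 0 < ξ ℓ := lt_of_le_of_ne (hξΔ.1 ℓ) (Ne.symm h)
          refine div_nonneg (add_nonneg ?_ ?_) hξℓ.le
          · exact mul_nonneg (mul_nonneg ha.le (hξ₁.1 ℓ)) ((hχ₁ ℓ).1 i)
          · exact mul_nonneg (mul_nonneg hb.le (hξ₂.1 ℓ)) ((hχ₂ ℓ).1 i)
      · by_cases h : ξ ℓ = 0
        · simp only [hχdef, if_pos h]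
          exact (hχ₁ ℓ).2
        · simp only [hχdef, if_neg h]
          rw [← Finset.sum_div, Finset.sum_add_distrib]
          have e1 : ∑ i, a * ξ₁ ℓ * χ₁ ℓ i = a * ξ₁ ℓ := by
            rw [← Finset.mul_sum, (hχ₁ ℓ).2, mul_one]
          have e2 : ∑ i, b * ξ₂ ℓ * χ₂ ℓ i = b * ξ₂ ℓ := by
            rw [← Finset.mul_sum, (hχ₂ ℓ).2, mul_one]
          rw [e1, e2, ← hξapp ℓ]
          exact div_self h
    have haP : ∀ i, actionProb ξ χ i = a * actionProb ξ₁ χ₁ i + b * actionProb ξ₂ χ₂ i := by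
      intro i
      unfold actionProb
      simp_rw [hkey]
      rw [Finset.sum_add_distrib, Finset.mul_sum, Finset.mul_sum]
      congr 1 <;> exact Finset.sum_congr rfl fun ℓ _ => by ring
    have hrj : ∀ j, ∑ ℓ, ξ ℓ * ∑ i, χ ℓ i * G ℓ i j =
        a * (∑ ℓ, ξ₁ ℓ * ∑ i, χ₁ ℓ i * G ℓ i j) +
        b * (∑ ℓ, ξ₂ ℓ * ∑ i, χ₂ ℓ i * G ℓ i j) := by
      intro j
      have e : ∀ (η : K → ℝ) (ψ : K → I → ℝ) (ℓ : K),
          η ℓ * ∑ i, ψ ℓ i * G ℓ i j = ∑ i, (η ℓ * ψ ℓ i) * G ℓ i j := by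
        intro η ψ ℓ; rw [Finset.mul_sum]; exact Finset.sum_congr rfl fun i _ => by ring
      simp_rw [e]
      rw [Finset.mul_sum, Finset.mul_sum, ← Finset.sum_add_distrib]
      refine Finset.sum_congr rfl fun ℓ _ => ?_
      rw [Finset.mul_sum, Finset.mul_sum, ← Finset.sum_add_distrib]
      refine Finset.sum_congr rfl fun i _ => ?_
      rw [hkey]; ring
    have hr : a * onestagePayoff G ξ₁ χ₁ + b * onestagePayoff G ξ₂ χ₂ ≤
        onestagePayoff G ξ χ := by
      refine le_ciInf fun j => ?_
      rw [hrj j]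
      have i1 : onestagePayoff G ξ₁ χ₁ ≤ ∑ ℓ, ξ₁ ℓ * ∑ i, χ₁ ℓ i * G ℓ i j :=
        ciInf_le (Set.Finite.bddBelow (Set.finite_range _)) j
      have i2 : onestagePayoff G ξ₂ χ₂ ≤ ∑ ℓ, ξ₂ ℓ * ∑ i, χ₂ ℓ i * G ℓ i j :=
        ciInf_le (Set.Finite.bddBelow (Set.finite_range _)) j
      nlinarith
    have hcont : ∀ i,
        a * (actionProb ξ₁ χ₁ i * f (Matrix.vecMul (posterior ξ₁ χ₁ i) M)) +
        b * (actionProb ξ₂ χ₂ i * f (Matrix.vecMul (posterior ξ₂ χ₂ i) M)) ≤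
        actionProb ξ χ i * f (Matrix.vecMul (posterior ξ χ i) M) := by
      intro i
      have hA₁0 : 0 ≤ actionProb ξ₁ χ₁ i :=
        actionProb_nonneg hξ₁.1 (fun ℓ i => (hχ₁ ℓ).1 i) i
      have hA₂0 : 0 ≤ actionProb ξ₂ χ₂ i :=
        actionProb_nonneg hξ₂.1 (fun ℓ i => (hχ₂ ℓ).1 i) i
      have hA : actionProb ξ χ i = a * actionProb ξ₁ χ₁ i + b * actionProb ξ₂ χ₂ i := haP i
      by_cases h0 : actionProb ξ χ i = 0
      · have h1 : actionProb ξ₁ χ₁ i = 0 := by nlinarith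
        have h2 : actionProb ξ₂ χ₂ i = 0 := by nlinarith
        rw [h0, h1, h2]; simp
      have hApos : 0 < actionProb ξ χ i :=
        lt_of_le_of_ne (actionProb_nonneg hξΔ.1 (fun ℓ i => (hχmem ℓ).1 i) i) (Ne.symm h0)
      by_cases h1 : actionProb ξ₁ χ₁ i = 0
      · have hz : ∀ ℓ, ξ₁ ℓ * χ₁ ℓ i = 0 :=
          term_eq_zero hξ₁.1 (fun ℓ i => (hχ₁ ℓ).1 i) h1
        have hAb : actionProb ξ χ i = b * actionProb ξ₂ χ₂ i := by
          rw [hA, h1, mul_zero, zero_add]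
        have hpost : posterior ξ χ i = posterior ξ₂ χ₂ i := by
          funext ℓ
          unfold posterior
          have hnum : ξ ℓ * χ ℓ i = b * (ξ₂ ℓ * χ₂ ℓ i) := by
            rw [hkey ℓ i, mul_assoc a, hz ℓ, mul_zero, zero_add, mul_assoc]
          rw [hnum, hAb, mul_div_mul_left _ _ hb.ne']
        rw [hpost, h1]
        refine le_of_eq ?_
        rw [hAb]; ring
      by_cases h2 : actionProb ξ₂ χ₂ i = 0
      · have hz : ∀ ℓ, ξ₂ ℓ * χ₂ ℓ i = 0 :=
          term_eq_zero hξ₂.1 (fun ℓ i => (hχ₂ ℓ).1 i) h2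
        have hAb : actionProb ξ χ i = a * actionProb ξ₁ χ₁ i := by
          rw [hA, h2, mul_zero, add_zero]
        have hpost : posterior ξ χ i = posterior ξ₁ χ₁ i := by
          funext ℓ
          unfold posterior
          have hnum : ξ ℓ * χ ℓ i = a * (ξ₁ ℓ * χ₁ ℓ i) := by
            rw [hkey ℓ i, mul_assoc b, hz ℓ, mul_zero, add_zero, mul_assoc]
          rw [hnum, hAb, mul_div_mul_left _ _ ha.ne']
        rw [hpost, h2]
        refine le_of_eq ?_
        rw [hAb]; ring
      -- main case: both positive
      have hA₁pos : 0 < actionProb ξ₁ χ₁ i := lt_of_le_of_ne hA₁0 (Ne.symm h1)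
      have hA₂pos : 0 < actionProb ξ₂ χ₂ i := lt_of_le_of_ne hA₂0 (Ne.symm h2)
      set w₁ := a * actionProb ξ₁ χ₁ i / actionProb ξ χ i with hw₁def
      set w₂ := b * actionProb ξ₂ χ₂ i / actionProb ξ χ i with hw₂def
      have hw₁ : 0 ≤ w₁ := div_nonneg (mul_nonneg ha.le hA₁0) hApos.le
      have hw₂ : 0 ≤ w₂ := div_nonneg (mul_nonneg hb.le hA₂0) hApos.le
      have hwsum : w₁ + w₂ = 1 := by
        rw [hw₁def, hw₂def, ← add_div, ← hA, div_self h0]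
      have hpost : posterior ξ χ i =
          w₁ • posterior ξ₁ χ₁ i + w₂ • posterior ξ₂ χ₂ i := by
        funext ℓ
        simp only [Pi.add_apply, Pi.smul_apply, smul_eq_mul]
        unfold posterior
        rw [hkey ℓ i, hw₁def, hw₂def]
        field_simp
      have hjensen := hcf.2 (vecMul_mem hM (posterior_mem hξ₁ hχ₁ hA₁pos))
        (vecMul_mem hM (posterior_mem hξ₂ hχ₂ hA₂pos)) hw₁ hw₂ hwsum
      have hlin : w₁ • Matrix.vecMul (posterior ξ₁ χ₁ i) M +
          w₂ • Matrix.vecMul (posterior ξ₂ χ₂ i) M =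
          Matrix.vecMul (posterior ξ χ i) M := by
        rw [hpost, Matrix.add_vecMul, Matrix.smul_vecMul, Matrix.smul_vecMul]
      rw [hlin] at hjensen
      simp only [smul_eq_mul] at hjensen
      have hmul := mul_le_mul_of_nonneg_left hjensen hApos.le
      calc a * (actionProb ξ₁ χ₁ i * f (Matrix.vecMul (posterior ξ₁ χ₁ i) M)) +
          b * (actionProb ξ₂ χ₂ i * f (Matrix.vecMul (posterior ξ₂ χ₂ i) M))
          = actionProb ξ χ i * (w₁ * f (Matrix.vecMul (posterior ξ₁ χ₁ i) M) +
              w₂ * f (Matrix.vecMul (posterior ξ₂ χ₂ i) M)) := by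
            rw [hw₁def, hw₂def]; field_simp
        _ ≤ actionProb ξ χ i * f (Matrix.vecMul (posterior ξ χ i) M) := hmul
    have hsum : a * (∑ i, actionProb ξ₁ χ₁ i * f (Matrix.vecMul (posterior ξ₁ χ₁ i) M)) +
        b * (∑ i, actionProb ξ₂ χ₂ i * f (Matrix.vecMul (posterior ξ₂ χ₂ i) M)) ≤
        ∑ i, actionProb ξ χ i * f (Matrix.vecMul (posterior ξ χ i) M) := by
      rw [Finset.mul_sum, Finset.mul_sum, ← Finset.sum_add_distrib]
      exact Finset.sum_le_sum fun i _ => hcont i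
    have hin : (1 - δ) * onestagePayoff G ξ χ +
        δ * ∑ i, actionProb ξ χ i * f (Matrix.vecMul (posterior ξ χ i) M) ≤
        bell M G δ f ξ :=
      le_csSup (bell_set_bddAbove hM hGC hδ0 hδ1 hf hξΔ) ⟨χ, hχmem, rfl⟩
    have e1 : a * ((1 - δ) * onestagePayoff G ξ₁ χ₁ +
          δ * ∑ i, actionProb ξ₁ χ₁ i * f (Matrix.vecMul (posterior ξ₁ χ₁ i) M)) +
        b * ((1 - δ) * onestagePayoff G ξ₂ χ₂ +
          δ * ∑ i, actionProb ξ₂ χ₂ i * f (Matrix.vecMul (posterior ξ₂ χ₂ i) M)) =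
        (1 - δ) * (a * onestagePayoff G ξ₁ χ₁ + b * onestagePayoff G ξ₂ χ₂) +
        δ * (a * (∑ i, actionProb ξ₁ χ₁ i * f (Matrix.vecMul (posterior ξ₁ χ₁ i) M)) +
             b * (∑ i, actionProb ξ₂ χ₂ i * f (Matrix.vecMul (posterior ξ₂ χ₂ i) M))) := by
      ring
    rw [e1]
    have h1δ : (0:ℝ) ≤ 1 - δ := by linarith
    calc (1 - δ) * (a * onestagePayoff G ξ₁ χ₁ + b * onestagePayoff G ξ₂ χ₂) +
        δ * (a * (∑ i, actionProb ξ₁ χ₁ i * f (Matrix.vecMul (posterior ξ₁ χ₁ i) M)) +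
             b * (∑ i, actionProb ξ₂ χ₂ i * f (Matrix.vecMul (posterior ξ₂ χ₂ i) M)))
        ≤ (1 - δ) * onestagePayoff G ξ χ +
          δ * ∑ i, actionProb ξ χ i * f (Matrix.vecMul (posterior ξ χ i) M) :=
          add_le_add (mul_le_mul_of_nonneg_left hr h1δ)
            (mul_le_mul_of_nonneg_left hsum hδ0)
      _ ≤ bell M G δ f ξ := hin
  -- conclude concavity from the key claim
  simp only [smul_eq_mul]
  have h2 : ∀ x₁ ∈ { x : ℝ | ∃ χ : K → I → ℝ, (∀ ℓ, χ ℓ ∈ stdSimplex ℝ I) ∧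
      x = (1 - δ) * onestagePayoff G ξ₁ χ +
          δ * ∑ i, actionProb ξ₁ χ i * f (Matrix.vecMul (posterior ξ₁ χ i) M) },
      b * bell M G δ f ξ₂ ≤ bell M G δ f ξ - a * x₁ := by
    intro x₁ hx₁
    have hsup : bell M G δ f ξ₂ ≤ (bell M G δ f ξ - a * x₁) / b := by
      refine csSup_le (bell_set_nonempty M G δ f ξ₂) fun x₂ hx₂ => ?_
      rw [le_div_iff₀ hb]
      have := key x₁ hx₁ x₂ hx₂
      linarith
    linarith [(le_div_iff₀ hb).1 hsup]
  have h1 : bell M G δ f ξ₁ * a ≤ bell M G δ f ξ - b * bell M G δ f ξ₂ := by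
    rw [← le_div_iff₀ ha]
    refine csSup_le (bell_set_nonempty M G δ f ξ₁) fun x₁ hx₁ => ?_
    rw [le_div_iff₀ ha]
    linarith [h2 x₁ hx₁]
  linarith

end MCGAux

namespace MCGAux

variable {K I J : Type*} [Fintype K] [Fintype I] [Fintype J] [Nonempty I] [Nonempty J]

/-- Jensen step: for concave `f`, the free-information operator at `ξ` is
dominated by `f (ξ M)`. -/
theorem bell_one_le {M : Matrix K K ℝ} (hM : IsStochastic M) {G : K → I → J → ℝ}
    {f : (K → ℝ) → ℝ} (hcf : ConcaveOn ℝ (stdSimplex ℝ K) f) {ξ : K → ℝ}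
    (hξ : ξ ∈ stdSimplex ℝ K) :
    bell M G 1 f ξ ≤ f (Matrix.vecMul ξ M) := by
  classical
  refine csSup_le (bell_set_nonempty M G 1 f ξ) ?_
  rintro x ⟨χ, hχ, rfl⟩
  rw [sub_self, zero_mul, zero_add, one_mul]
  have hξ0 := hξ.1
  have hχ0 : ∀ ℓ i, 0 ≤ χ ℓ i := fun ℓ i => (hχ ℓ).1 i
  set q : I → K → ℝ := fun i => if 0 < actionProb ξ χ i then
    Matrix.vecMul (posterior ξ χ i) M else Matrix.vecMul ξ M with hqdef
  have hqΔ : ∀ i, q i ∈ stdSimplex ℝ K := by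
    intro i
    by_cases h : 0 < actionProb ξ χ i
    · simp only [hqdef, if_pos h]
      exact vecMul_mem hM (posterior_mem hξ hχ h)
    · simp only [hqdef, if_neg h]
      exact vecMul_mem hM hξ
  have hterm : ∀ i, actionProb ξ χ i * f (Matrix.vecMul (posterior ξ χ i) M) =
      actionProb ξ χ i • f (q i) := by
    intro i
    by_cases h : 0 < actionProb ξ χ i
    · simp only [hqdef, if_pos h, smul_eq_mul]
    · have h0 : actionProb ξ χ i = 0 := le_antisymm (not_lt.1 h) (actionProb_nonneg hξ0 hχ0 i)
      rw [h0, zero_mul, zero_smul]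
  have happ : ∀ i ℓ, actionProb ξ χ i * q i ℓ = ∑ k, ξ k * χ k i * M k ℓ := by
    intro i ℓ
    by_cases h : 0 < actionProb ξ χ i
    · simp only [hqdef, if_pos h]
      have : Matrix.vecMul (posterior ξ χ i) M ℓ = ∑ k, posterior ξ χ i k * M k ℓ := by
        simp [Matrix.vecMul, dotProduct]
      rw [this, Finset.mul_sum]
      refine Finset.sum_congr rfl fun k _ => ?_
      rw [← mul_assoc, actionProb_mul_posterior hξ0 hχ0 i k]
    · have h0 : actionProb ξ χ i = 0 := le_antisymm (not_lt.1 h) (actionProb_nonneg hξ0 hχ0 i)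
      rw [h0, zero_mul]
      refine (Finset.sum_eq_zero fun k _ => ?_).symm
      rw [term_eq_zero hξ0 hχ0 h0 k, zero_mul]
  have hcomb : ∑ i, actionProb ξ χ i • q i = Matrix.vecMul ξ M := by
    funext ℓ
    rw [Finset.sum_apply]
    simp only [Pi.smul_apply, smul_eq_mul]
    rw [Finset.sum_congr rfl (fun i _ => happ i ℓ), Finset.sum_comm]
    have e : ∀ k, ∑ i, ξ k * χ k i * M k ℓ = ξ k * M k ℓ := by
      intro k
      have : ∀ i, ξ k * χ k i * M k ℓ = (ξ k * M k ℓ) * χ k i := fun i => by ring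
      simp_rw [this]
      rw [← Finset.mul_sum, (hχ k).2, mul_one]
    simp_rw [e]
    simp [Matrix.vecMul, dotProduct]
  have hjensen := hcf.le_map_sum (t := Finset.univ) (w := actionProb ξ χ) (p := q)
    (fun i _ => actionProb_nonneg hξ0 hχ0 i) (sum_actionProb hξ hχ) (fun i _ => hqΔ i)
  rw [hcomb] at hjensen
  calc ∑ i, actionProb ξ χ i * f (Matrix.vecMul (posterior ξ χ i) M)
      = ∑ i, actionProb ξ χ i • f (q i) := Finset.sum_congr rfl fun i _ => hterm i
    _ ≤ f (Matrix.vecMul ξ M) := hjensen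

/-- Comparison: a fixed point of the Bellman operator is dominated on the simplex
by any bounded super-solution. -/
theorem fix_le_super [Nonempty K] {M : Matrix K K ℝ} (hM : IsStochastic M)
    {G : K → I → J → ℝ} {C : ℝ} (hGC : ∀ ℓ i j, G ℓ i j ≤ C) {δ : ℝ}
    (hδ0 : 0 ≤ δ) (hδ1 : δ < 1) {W g : (K → ℝ) → ℝ} (hWb : Bdd C W) (hgb : Bdd C g)
    (hW : ∀ ξ ∈ stdSimplex ℝ K, W ξ = bell M G δ W ξ)
    (hg : ∀ ξ ∈ stdSimplex ℝ K, bell M G δ g ξ ≤ g ξ) :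
    ∀ ξ ∈ stdSimplex ℝ K, W ξ ≤ g ξ := by
  set S : Set ℝ := (fun ξ => W ξ - g ξ) '' stdSimplex ℝ K with hSdef
  have hSne : S.Nonempty := by
    refine ⟨_, ⟨fun _ => (Fintype.card K : ℝ)⁻¹, ?_, rfl⟩⟩
    constructor
    · intro k; exact inv_nonneg.2 (Nat.cast_nonneg _)
    · have hcard : (Fintype.card K : ℝ) ≠ 0 := Nat.cast_ne_zero.2 Fintype.card_ne_zero
      simp [Finset.sum_const, Finset.card_univ, nsmul_eq_mul, mul_inv_cancel₀ hcard]
  have hSbdd : BddAbove S := by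
    refine ⟨C, ?_⟩
    rintro x ⟨ξ, hξ, rfl⟩
    have h1 := (hWb ξ hξ).2
    have h2 := (hgb ξ hξ).1
    show W ξ - g ξ ≤ C
    linarith
  set m := sSup S with hmdef
  have hub : ∀ ξ ∈ stdSimplex ℝ K, W ξ - g ξ ≤ m := fun ξ hξ =>
    le_csSup hSbdd ⟨ξ, hξ, rfl⟩
  have hstep : ∀ ξ ∈ stdSimplex ℝ K, W ξ ≤ g ξ + δ * m := by
    intro ξ hξ
    have h1 : bell M G δ W ξ ≤ bell M G δ g ξ + δ * m :=
      bell_le_bell_add hM hGC hδ0 hδ1.le hgb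
        (fun η hη => by linarith [hub η hη]) hξ
    rw [hW ξ hξ]
    linarith [hg ξ hξ]
  have hm : m ≤ δ * m := by
    refine csSup_le hSne ?_
    rintro x ⟨ξ, hξ, rfl⟩
    show W ξ - g ξ ≤ δ * m
    linarith [hstep ξ hξ]
  have hm0 : m ≤ 0 := by nlinarith
  intro ξ hξ
  linarith [hub ξ hξ]

end MCGAux

open MCGAux in
theorem markov_chain_game_value_nonincreasing_at_invariant
    {K I J : Type*} [Fintype K] [Nonempty K] [Fintype I] [Nonempty I]
    [Fintype J] [Nonempty J]
    (M : Matrix K K ℝ) (hM : IsStochastic M)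
    (G : K → I → J → ℝ) (hG : ∀ ℓ i j, 0 ≤ G ℓ i j)
    (C : ℝ) (hC : IsGreatest { x : ℝ | ∃ ℓ i j, x = G ℓ i j } C)
    (V : ℝ → (K → ℝ) → ℝ) (hV : IsGameValueFamily M G C V)
    (π : K → ℝ) (hπ : π ∈ stdSimplex ℝ K) (hπinv : Matrix.vecMul π M = π) :
    ∀ δ₁ δ₂ : ℝ, 0 ≤ δ₁ → δ₁ ≤ δ₂ → δ₂ < 1 → V δ₂ π ≤ V δ₁ π := by
  intro δ₁ δ₂ h10 h12 h21
  have hδ₁1 : δ₁ < 1 := lt_of_le_of_lt h12 h21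
  have hδ₂0 : 0 ≤ δ₂ := le_trans h10 h12
  have hGC : ∀ ℓ i j, G ℓ i j ≤ C := fun ℓ i j => hC.2 ⟨ℓ, i, j, rfl⟩
  have hC0 : 0 ≤ C := by
    obtain ⟨ℓ, i, j, h⟩ := hC.1
    exact h ▸ hG ℓ i j
  have hVb1 : Bdd C (V δ₁) := fun ξ hξ => (hV δ₁ ⟨h10, hδ₁1⟩).1 ξ hξ
  have hVb2 : Bdd C (V δ₂) := fun ξ hξ => (hV δ₂ ⟨hδ₂0, h21⟩).1 ξ hξ
  have hfix1 : ∀ ξ ∈ stdSimplex ℝ K, V δ₁ ξ = bell M G δ₁ (V δ₁) ξ := by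
    intro ξ hξ
    simp only [bell]
    exact (hV δ₁ ⟨h10, hδ₁1⟩).2 ξ hξ
  have hfix2 : ∀ ξ ∈ stdSimplex ℝ K, V δ₂ ξ = bell M G δ₂ (V δ₂) ξ := by
    intro ξ hξ
    simp only [bell]
    exact (hV δ₂ ⟨hδ₂0, h21⟩).2 ξ hξ
  -- Step 1: concavity of V δ₁ via value iteration
  set F : ℕ → (K → ℝ) → ℝ := fun n => (fun f => bell M G δ₁ f)^[n] (fun _ => 0) with hFdef
  have hFsucc : ∀ n, F (n + 1) = bell M G δ₁ (F n) := fun n =>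
    Function.iterate_succ_apply' _ _ _
  have hFbdd : ∀ n, Bdd C (F n) := by
    intro n
    induction n with
    | zero => exact fun ξ _ => ⟨le_refl 0, hC0⟩
    | succ n ih =>
      rw [hFsucc]
      exact bell_bdd hM hG hGC h10 hδ₁1.le ih
  have hFconc : ∀ n, ConcaveOn ℝ (stdSimplex ℝ K) (F n) := by
    intro n
    induction n with
    | zero => exact concaveOn_const _ (convex_stdSimplex ℝ K)
    | succ n ih =>
      rw [hFsucc]
      exact bell_concave hM hG hGC h10 hδ₁1.le (hFbdd n) ih
  have hFdist : ∀ n, ∀ ξ ∈ stdSimplex ℝ K,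
      V δ₁ ξ ≤ F n ξ + δ₁ ^ n * C ∧ F n ξ ≤ V δ₁ ξ + δ₁ ^ n * C := by
    intro n
    induction n with
    | zero =>
      intro ξ hξ
      have h1 := (hVb1 ξ hξ).1
      have h2 := (hVb1 ξ hξ).2
      constructor
      · show V δ₁ ξ ≤ (fun _ => (0:ℝ)) ξ + δ₁ ^ 0 * C
        simp only [pow_zero, one_mul]
        linarith
      · show (fun _ => (0:ℝ)) ξ ≤ V δ₁ ξ + δ₁ ^ 0 * C
        simp only [pow_zero, one_mul]
        linarith
    | succ n ih =>
      intro ξ hξ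
      constructor
      · have : bell M G δ₁ (V δ₁) ξ ≤ bell M G δ₁ (F n) ξ + δ₁ * (δ₁ ^ n * C) :=
          bell_le_bell_add hM hGC h10 hδ₁1.le (hFbdd n)
            (fun η hη => (ih η hη).1) hξ
        rw [← hfix1 ξ hξ, ← hFsucc] at this
        calc V δ₁ ξ ≤ F (n + 1) ξ + δ₁ * (δ₁ ^ n * C) := this
          _ = F (n + 1) ξ + δ₁ ^ (n + 1) * C := by ring
      · have : bell M G δ₁ (F n) ξ ≤ bell M G δ₁ (V δ₁) ξ + δ₁ * (δ₁ ^ n * C) :=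
          bell_le_bell_add hM hGC h10 hδ₁1.le hVb1
            (fun η hη => (ih η hη).2) hξ
        rw [← hfix1 ξ hξ, ← hFsucc] at this
        calc F (n + 1) ξ ≤ V δ₁ ξ + δ₁ * (δ₁ ^ n * C) := this
          _ = V δ₁ ξ + δ₁ ^ (n + 1) * C := by ring
  have hVconc : ConcaveOn ℝ (stdSimplex ℝ K) (V δ₁) := by
    refine ⟨convex_stdSimplex ℝ K, ?_⟩
    intro x hx y hy a b ha hb hab
    have hz : a • x + b • y ∈ stdSimplex ℝ K := convex_stdSimplex ℝ K hx hy ha hb hab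
    have key : ∀ n, a * V δ₁ x + b * V δ₁ y ≤ V δ₁ (a • x + b • y) + 2 * (δ₁ ^ n * C) := by
      intro n
      have h1 := (hFdist n x hx).1
      have h2 := (hFdist n y hy).1
      have h3 := (hFdist n (a • x + b • y) hz).2
      have h4 := (hFconc n).2 hx hy ha hb hab
      simp only [smul_eq_mul] at h4
      have m1 := mul_le_mul_of_nonneg_left h1 ha
      have m2 := mul_le_mul_of_nonneg_left h2 hb
      calc a * V δ₁ x + b * V δ₁ y
          ≤ a * (F n x + δ₁ ^ n * C) + b * (F n y + δ₁ ^ n * C) := add_le_add m1 m2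
        _ = (a * F n x + b * F n y) + (a + b) * (δ₁ ^ n * C) := by ring
        _ = (a * F n x + b * F n y) + δ₁ ^ n * C := by rw [hab, one_mul]
        _ ≤ F n (a • x + b • y) + δ₁ ^ n * C := by linarith
        _ ≤ V δ₁ (a • x + b • y) + 2 * (δ₁ ^ n * C) := by linarith
    have t0 : Filter.Tendsto (fun n : ℕ => δ₁ ^ n) Filter.atTop (nhds 0) :=
      tendsto_pow_atTop_nhds_zero_of_lt_one h10 hδ₁1
    have t1 : Filter.Tendsto (fun n : ℕ => V δ₁ (a • x + b • y) + 2 * (δ₁ ^ n * C))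
        Filter.atTop (nhds (V δ₁ (a • x + b • y) + 2 * (0 * C))) :=
      Filter.Tendsto.const_add _ (Filter.Tendsto.const_mul 2 (t0.mul_const C))
    have hlim := ge_of_tendsto' t1 key
    simp only [smul_eq_mul]
    simpa using hlim
  -- Step 2: the shifted value functions S n
  set S : ℕ → (K → ℝ) → ℝ := fun n => (fun f => bell M G 1 f)^[n] (V δ₁) with hSdef
  have hS0 : S 0 = V δ₁ := rfl
  have hSsucc : ∀ n, S (n + 1) = bell M G 1 (S n) := fun n =>
    Function.iterate_succ_apply' _ _ _
  have hSbdd : ∀ n, Bdd C (S n) := by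
    intro n
    induction n with
    | zero => exact hVb1
    | succ n ih =>
      rw [hSsucc]
      exact bell_bdd hM hG hGC zero_le_one le_rfl ih
  have hSconc : ∀ n, ConcaveOn ℝ (stdSimplex ℝ K) (S n) := by
    intro n
    induction n with
    | zero => exact hVconc
    | succ n ih =>
      rw [hSsucc]
      exact bell_concave hM hG hGC zero_le_one le_rfl (hSbdd n) ih
  have hSπ : ∀ n, S n π ≤ V δ₁ π := by
    intro n
    induction n with
    | zero => exact le_refl _
    | succ n ih =>
      rw [hSsucc]
      calc bell M G 1 (S n) π ≤ S n (Matrix.vecMul π M) := bell_one_le hM (hSconc n) hπ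
        _ = S n π := by rw [hπinv]
        _ ≤ V δ₁ π := ih
  have hA : ∀ (n : ℕ) (ξ : K → ℝ), ξ ∈ stdSimplex ℝ K →
      ∀ (χ : K → I → ℝ), (∀ ℓ, χ ℓ ∈ stdSimplex ℝ I) →
      (∑ i, actionProb ξ χ i * S n (Matrix.vecMul (posterior ξ χ i) M)) ≤ S (n + 1) ξ := by
    intro n ξ hξ χ hχ
    rw [hSsucc]
    exact le_csSup (bell_set_bddAbove hM hGC zero_le_one le_rfl (hSbdd n) hξ)
      ⟨χ, hχ, by ring⟩
  have helem : ∀ ξ ∈ stdSimplex ℝ K, ∀ (χ : K → I → ℝ), (∀ ℓ, χ ℓ ∈ stdSimplex ℝ I) →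
      (1 - δ₁) * onestagePayoff G ξ χ +
        δ₁ * ∑ i, actionProb ξ χ i * V δ₁ (Matrix.vecMul (posterior ξ χ i) M) ≤ V δ₁ ξ := by
    intro ξ hξ χ hχ
    rw [hfix1 ξ hξ]
    exact le_csSup (bell_set_bddAbove hM hGC h10 hδ₁1.le hVb1 hξ) ⟨χ, hχ, rfl⟩
  -- Step 3: the mixture coefficients
  have h1δ₁ : (0:ℝ) < 1 - δ₁ := by linarith
  set e : ℝ := (δ₂ - δ₁) / (1 - δ₁) with hedef
  have he0 : 0 ≤ e := div_nonneg (by linarith) h1δ₁.le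
  set cc : ℕ → ℝ := fun n => Nat.rec ((1 - δ₂) / (1 - δ₁))
    (fun m _ => (1 - δ₂) * e * δ₂ ^ m) n with hccdef
  have hcc0 : cc 0 = (1 - δ₂) / (1 - δ₁) := rfl
  have hccsucc : ∀ m, cc (m + 1) = (1 - δ₂) * e * δ₂ ^ m := fun m => rfl
  have hccnn : ∀ n, 0 ≤ cc n := by
    intro n
    cases n with
    | zero => exact div_nonneg (by linarith) h1δ₁.le
    | succ m =>
      rw [hccsucc]
      exact mul_nonneg (mul_nonneg (by linarith) he0) (pow_nonneg hδ₂0 m)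
  have idr : cc 0 * (1 - δ₁) = 1 - δ₂ := by
    rw [hcc0]
    field_simp
  have hcc1 : cc 1 = (1 - δ₂) * e * δ₂ ^ 0 := rfl
  have id1 : δ₂ * cc 0 = cc 0 * δ₁ + cc 1 := by
    rw [hcc0, hcc1, hedef]
    field_simp
    ring
  have id2 : ∀ m, δ₂ * cc (m + 1) = cc (m + 1 + 1) := by
    intro m
    have h1 : cc (m + 1 + 1) = (1 - δ₂) * e * δ₂ ^ (m + 1) := rfl
    rw [hccsucc, h1]
    ring
  have csum : ∀ m, (∑ n ∈ Finset.range (m + 1), cc n) + e * δ₂ ^ m = 1 := by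
    intro m
    induction m with
    | zero =>
      rw [Finset.sum_range_one, hcc0, hedef, pow_zero, mul_one]
      field_simp
      ring
    | succ m ih =>
      rw [Finset.sum_range_succ]
      have hid : cc (m + 1) + e * δ₂ ^ (m + 1) = e * δ₂ ^ m := by
        rw [hccsucc]; ring
      linarith
  -- Step 4: the super-solutions T m
  set T : ℕ → (K → ℝ) → ℝ := fun m ξ =>
    (∑ n ∈ Finset.range (m + 1), cc n * S n ξ) + e * δ₂ ^ m * C with hTdef
  have hTbdd : ∀ m, Bdd C (T m) := by
    intro m ξ hξ
    constructor
    · refine add_nonneg (Finset.sum_nonneg fun n _ => mul_nonneg (hccnn n) (hSbdd n ξ hξ).1) ?_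
      exact mul_nonneg (mul_nonneg he0 (pow_nonneg hδ₂0 m)) hC0
    · have h1 : ∑ n ∈ Finset.range (m + 1), cc n * S n ξ ≤
          ∑ n ∈ Finset.range (m + 1), cc n * C :=
        Finset.sum_le_sum fun n _ => mul_le_mul_of_nonneg_left (hSbdd n ξ hξ).2 (hccnn n)
      have h2 : ∑ n ∈ Finset.range (m + 1), cc n * C =
          (∑ n ∈ Finset.range (m + 1), cc n) * C := (Finset.sum_mul _ _ _).symm
      have h3 := csum m
      show (∑ n ∈ Finset.range (m + 1), cc n * S n ξ) + e * δ₂ ^ m * C ≤ C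
      calc (∑ n ∈ Finset.range (m + 1), cc n * S n ξ) + e * δ₂ ^ m * C
          ≤ (∑ n ∈ Finset.range (m + 1), cc n) * C + e * δ₂ ^ m * C := by
            rw [← h2]; linarith
        _ = ((∑ n ∈ Finset.range (m + 1), cc n) + e * δ₂ ^ m) * C := by ring
        _ = C := by rw [h3, one_mul]
  have hTsuper : ∀ m, ∀ ξ ∈ stdSimplex ℝ K, bell M G δ₂ (T m) ξ ≤ T m ξ := by
    intro m ξ hξ
    refine csSup_le (bell_set_nonempty M G δ₂ (T m) ξ) ?_
    rintro x ⟨χ, hχ, rfl⟩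
    set A : ℕ → ℝ := fun n =>
      ∑ i, actionProb ξ χ i * S n (Matrix.vecMul (posterior ξ χ i) M) with hAdef
    have hTexp : ∑ i, actionProb ξ χ i * T m (Matrix.vecMul (posterior ξ χ i) M)
        = (∑ n ∈ Finset.range (m + 1), cc n * A n) + e * δ₂ ^ m * C := by
      have e1 : ∀ i, actionProb ξ χ i * T m (Matrix.vecMul (posterior ξ χ i) M)
          = (∑ n ∈ Finset.range (m + 1),
              cc n * (actionProb ξ χ i * S n (Matrix.vecMul (posterior ξ χ i) M)))
            + actionProb ξ χ i * (e * δ₂ ^ m * C) := by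
        intro i
        simp only [hTdef]
        rw [mul_add, Finset.mul_sum]
        congr 1
        exact Finset.sum_congr rfl fun n _ => by ring
      rw [Finset.sum_congr rfl fun i _ => e1 i, Finset.sum_add_distrib, Finset.sum_comm]
      congr 1
      · exact Finset.sum_congr rfl fun n _ => by rw [← Finset.mul_sum]
      · rw [← Finset.sum_mul, sum_actionProb hξ hχ, one_mul]
    rw [hTexp]
    -- abbreviations
    set r : ℝ := onestagePayoff G ξ χ with hrdef
    -- split the weighted sum
    have E1 : δ₂ * ((∑ n ∈ Finset.range (m + 1), cc n * A n) + e * δ₂ ^ m * C)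
        = δ₂ * (∑ n ∈ Finset.range m, cc (n + 1) * A (n + 1)) + δ₂ * (cc 0 * A 0)
          + δ₂ * (e * δ₂ ^ m * C) := by
      rw [Finset.sum_range_succ' (fun n => cc n * A n) m]
      ring
    have E2 : δ₂ * (∑ n ∈ Finset.range m, cc (n + 1) * A (n + 1)) ≤
        ∑ n ∈ Finset.range m, cc (n + 1 + 1) * S (n + 1 + 1) ξ := by
      rw [Finset.mul_sum]
      refine Finset.sum_le_sum fun n _ => ?_
      have ea : δ₂ * (cc (n + 1) * A (n + 1)) = cc (n + 1 + 1) * A (n + 1) := by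
        rw [← mul_assoc, id2 n]
      rw [ea]
      exact mul_le_mul_of_nonneg_left (hA (n + 1) ξ hξ χ hχ) (hccnn (n + 1 + 1))
    have E3 : δ₂ * (cc 0 * A 0) = cc 0 * (δ₁ * A 0) + cc 1 * A 0 := by
      rw [← mul_assoc, id1]; ring
    have E3b : cc 1 * A 0 ≤ cc 1 * S 1 ξ :=
      mul_le_mul_of_nonneg_left (hA 0 ξ hξ χ hχ) (hccnn 1)
    have hA0 : A 0 = ∑ i, actionProb ξ χ i * V δ₁ (Matrix.vecMul (posterior ξ χ i) M) := by
      simp only [hAdef, hS0]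
    have E4 : (1 - δ₂) * r + cc 0 * (δ₁ * A 0) ≤ cc 0 * S 0 ξ := by
      have h := helem ξ hξ χ hχ
      rw [← hA0, ← hrdef] at h
      have h' := mul_le_mul_of_nonneg_left h (hccnn 0)
      have idr' : (1 - δ₂) * r = cc 0 * ((1 - δ₁) * r) := by
        rw [← idr]; ring
      calc (1 - δ₂) * r + cc 0 * (δ₁ * A 0)
          = cc 0 * ((1 - δ₁) * r + δ₁ * A 0) := by rw [idr']; ring
        _ ≤ cc 0 * V δ₁ ξ := h'
        _ = cc 0 * S 0 ξ := by rw [hS0]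
    have E5 : (∑ n ∈ Finset.range m, cc (n + 1 + 1) * S (n + 1 + 1) ξ) + cc 1 * S 1 ξ =
        ∑ n ∈ Finset.range (m + 1), cc (n + 1) * S (n + 1) ξ := by
      rw [Finset.sum_range_succ' (fun n => cc (n + 1) * S (n + 1) ξ) m]
      norm_num
    have E6 : (∑ n ∈ Finset.range (m + 1), cc (n + 1) * S (n + 1) ξ) + cc 0 * S 0 ξ =
        ∑ n ∈ Finset.range (m + 1 + 1), cc n * S n ξ := by
      rw [Finset.sum_range_succ' (fun n => cc n * S n ξ) (m + 1)]
    have E7 : ∑ n ∈ Finset.range (m + 1 + 1), cc n * S n ξ =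
        (∑ n ∈ Finset.range (m + 1), cc n * S n ξ) + cc (m + 1) * S (m + 1) ξ :=
      Finset.sum_range_succ _ _
    have E8 : cc (m + 1) * S (m + 1) ξ ≤ cc (m + 1) * C :=
      mul_le_mul_of_nonneg_left (hSbdd (m + 1) ξ hξ).2 (hccnn (m + 1))
    have E9 : cc (m + 1) * C + δ₂ * (e * δ₂ ^ m * C) = e * δ₂ ^ m * C := by
      rw [hccsucc]; ring
    show (1 - δ₂) * r + δ₂ * ((∑ n ∈ Finset.range (m + 1), cc n * A n) + e * δ₂ ^ m * C)
        ≤ (∑ n ∈ Finset.range (m + 1), cc n * S n ξ) + e * δ₂ ^ m * C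
    linarith
  -- Step 5: compare and take limits
  have hcomp : ∀ m, V δ₂ π ≤ T m π := fun m =>
    fix_le_super hM hGC hδ₂0 h21 hVb2 (hTbdd m) hfix2 (hTsuper m) π hπ
  have hTmπ : ∀ m, T m π ≤ V δ₁ π + e * δ₂ ^ m * (C - V δ₁ π) := by
    intro m
    have s1 : ∑ n ∈ Finset.range (m + 1), cc n * S n π ≤
        ∑ n ∈ Finset.range (m + 1), cc n * V δ₁ π :=
      Finset.sum_le_sum fun n _ => mul_le_mul_of_nonneg_left (hSπ n) (hccnn n)
    have s2 : ∑ n ∈ Finset.range (m + 1), cc n * V δ₁ π =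
        (∑ n ∈ Finset.range (m + 1), cc n) * V δ₁ π := (Finset.sum_mul _ _ _).symm
    have s3 : (∑ n ∈ Finset.range (m + 1), cc n) = 1 - e * δ₂ ^ m := by
      linarith [csum m]
    rw [s3] at s2
    have s4 : (1 - e * δ₂ ^ m) * V δ₁ π + e * δ₂ ^ m * C =
        V δ₁ π + e * δ₂ ^ m * (C - V δ₁ π) := by ring
    show (∑ n ∈ Finset.range (m + 1), cc n * S n π) + e * δ₂ ^ m * C ≤
        V δ₁ π + e * δ₂ ^ m * (C - V δ₁ π)
    linarith
  have t0 : Filter.Tendsto (fun m : ℕ => δ₂ ^ m) Filter.atTop (nhds 0) :=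
    tendsto_pow_atTop_nhds_zero_of_lt_one hδ₂0 h21
  have t1 : Filter.Tendsto (fun m : ℕ => V δ₁ π + e * δ₂ ^ m * (C - V δ₁ π))
      Filter.atTop (nhds (V δ₁ π + e * 0 * (C - V δ₁ π))) := by
    refine Filter.Tendsto.const_add _ ?_
    exact Filter.Tendsto.mul_const _ (Filter.Tendsto.const_mul _ t0)
  have hfin := ge_of_tendsto' t1 fun m => le_trans (hcomp m) (hTmπ m)
  simpa using hfin
end
end
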